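/- For any finite poset P, the number of edges of the order polytope O(P) equals the number of edges of the chain polytope C(P). -/

import Mathlib

/-- Indicator vector of a subset `W` of `P` in `ℝ^P`. -/
noncomputable def rho {P : Type*} (W : Set P) : P → ℝ := W.indicator fun _ => 1

/-- The order polytope of a finite poset `P`. -/
def orderPolytope (P : Type*) [Fintype P] [PartialOrder P] : Set (P → ℝ) :=
  {f | (∀ i, 0 ≤ f i ∧ f i ≤ 1) ∧ ∀ i j : P, i ≤ j → f j ≤ f i}

/-- The chain polytope of a finite poset `P`. -/
def chainPolytope (P : Type*) [Fintype P] [PartialOrder P] : Set (P → ℝ) :=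
  {f | (∀ i, 0 ≤ f i) ∧ ∀ C : Finset P, IsMaxChain (· ≤ ·) (C : Set P) → ∑ i ∈ C, f i ≤ 1}

/-- A subset `S` of a poset `P` is connected in `P` if any two of its elements are
joined by a sequence within `S` whose consecutive members are comparable in `P`. -/
def ConnIn {P : Type*} [PartialOrder P] (S : Set P) : Prop :=
  ∀ x ∈ S, ∀ y ∈ S,
    Relation.ReflTransGen (fun u v => u ∈ S ∧ v ∈ S ∧ (u ≤ v ∨ v ≤ u)) x y

/-- The segment joining `u` and `v` is an edge (one-dimensional face) of `S`. -/
def IsEdgeOf {E : Type*} [AddCommGroup E] [Module ℝ E] (S : Set E) (u v : E) : Prop :=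
  u ≠ v ∧ IsExtreme ℝ S (segment ℝ u v)

/-- The set of maximal elements of a subset of a poset. -/
def maxSet {P : Type*} [PartialOrder P] (S : Set P) : Set P :=
  {x | x ∈ S ∧ ∀ y ∈ S, x ≤ y → x = y}

/-- The set of minimal elements of a subset of a poset. -/
def minSet {P : Type*} [PartialOrder P] (S : Set P) : Set P :=
  {x | x ∈ S ∧ ∀ y ∈ S, y ≤ x → x = y}

/-- The 1-skeleton of the order polytope, combinatorially: vertices are poset
ideals, adjacency is proper inclusion with connected difference. -/
def orderSkeleton (P : Type*) [PartialOrder P] :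
    SimpleGraph {I : Set P // IsLowerSet I} :=
  SimpleGraph.fromRel fun I J => I.1 ⊂ J.1 ∧ ConnIn (J.1 \ I.1)

/-- The 1-skeleton of the chain polytope, combinatorially: vertices are antichains,
adjacency is connectedness of the symmetric difference. -/
def chainSkeleton (P : Type*) [PartialOrder P] :
    SimpleGraph {A : Set P // IsAntichain (· ≤ ·) A} :=
  SimpleGraph.fromRel fun A B => ConnIn ((A.1 \ B.1) ∪ (B.1 \ A.1))

/-- The multiset of vertex degrees of a graph (the degree sequence, up to order). -/
noncomputable def degMultiset {V : Type*} [Fintype V] (G : SimpleGraph V) : Multiset ℕ :=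
  Finset.univ.val.map fun v => (G.neighborSet v).ncard

/-- `P` contains the poset `X = {a,b,c,g,h}` with `a<c, b<c, c<g, c<h` as a subposet. -/
def ContainsX (P : Type*) [PartialOrder P] : Prop :=
  ∃ a b c g h : P, a < c ∧ b < c ∧ c < g ∧ c < h ∧
    ¬ a ≤ b ∧ ¬ b ≤ a ∧ ¬ g ≤ h ∧ ¬ h ≤ g

/-- The pair `(I, J)` of poset ideals with `I ⊂ J` and `J \ I` connected in `P`. -/
def OmegaP {P : Type*} [PartialOrder P] (I J : Set P) : Prop :=
  IsLowerSet I ∧ IsLowerSet J ∧ I ⊂ J ∧ ConnIn (J \ I)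

/-- The pair `(A, B)` of distinct antichains with connected symmetric difference. -/
def PsiP {P : Type*} [PartialOrder P] (A B : Set P) : Prop :=
  IsAntichain (· ≤ ·) A ∧ IsAntichain (· ≤ ·) B ∧ A ≠ B ∧ ConnIn ((A \ B) ∪ (B \ A))

/-- First component of the map `Ω → Ψ`: `A = max J`. -/
def FmapA {P : Type*} [PartialOrder P] (_I J : Set P) : Set P := maxSet J

/-- Second component of the map `Ω → Ψ`:
`B = min(J \ I) ∪ (max I ∩ max J)`, with `min(J \ I) := ∅` when `|J \ I| = 1`. -/
def FmapB {P : Type*} [PartialOrder P] (I J : Set P) : Set P :=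
  (if (J \ I).ncard = 1 then ∅ else minSet (J \ I)) ∪ (maxSet I ∩ maxSet J)



open Relation Set
open scoped Classical

section Basics
variable {P : Type*}

lemma rho_apply (W : Set P) (i : P) : rho W i = if i ∈ W then 1 else 0 := by
  simp [rho, Set.indicator_apply]

lemma rho_mem (W : Set P) {i : P} (h : i ∈ W) : rho W i = 1 := by simp [rho_apply, h]
lemma rho_not_mem (W : Set P) {i : P} (h : i ∉ W) : rho W i = 0 := by simp [rho_apply, h]

lemma rho_inj : Function.Injective (rho (P := P)) := by
  intro A B h
  ext i
  constructor <;> intro hi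
  · by_contra hB
    have := congrFun h i
    rw [rho_mem _ hi, rho_not_mem _ hB] at this; norm_num at this
  · by_contra hA
    have := congrFun h i
    rw [rho_not_mem _ hA, rho_mem _ hi] at this; norm_num at this


end Basics


section Seg
variable {E : Type*} [AddCommGroup E] [Module ℝ E]

lemma seg_param {u v x : E} (hx : x ∈ segment ℝ u v) :
    ∃ t ∈ Set.Icc (0:ℝ) 1, x = u + t • (v - u) := by
  rw [segment_eq_image'] at hx
  obtain ⟨t, ht, rfl⟩ := hx
  exact ⟨t, ht, rfl⟩

lemma smul_dir_inj {u v : E} (huv : u ≠ v) {a b : ℝ}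
    (h : u + a • (v - u) = u + b • (v - u)) : a = b := by
  have h' : a • (v - u) = b • (v - u) := add_left_cancel h
  have h2 : (a - b) • (v - u) = 0 := by rw [sub_smul, h', sub_self]
  rcases smul_eq_zero.1 h2 with h3 | h3
  · exact sub_eq_zero.1 h3
  · exact absurd (sub_eq_zero.1 h3).symm huv

lemma segment_endpoints {u v u' v' : E} (huv : u ≠ v)
    (h : segment ℝ u v = segment ℝ u' v') :
    (u' = u ∧ v' = v) ∨ (u' = v ∧ v' = u) := by
  have hu' : u' ∈ segment ℝ u v := h ▸ left_mem_segment ℝ u' v'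
  have hv' : v' ∈ segment ℝ u v := h ▸ right_mem_segment ℝ u' v'
  obtain ⟨a, ha, hua⟩ := seg_param hu'
  obtain ⟨b, hb, hvb⟩ := seg_param hv'
  have hu : u ∈ segment ℝ u' v' := h ▸ left_mem_segment ℝ u v
  have hv : v ∈ segment ℝ u' v' := h ▸ right_mem_segment ℝ u v
  obtain ⟨s, hs, hus⟩ := seg_param hu
  obtain ⟨t, ht, hvt⟩ := seg_param hv
  rw [hua, hvb] at hus hvt
  have e0 : u + ((a + s * (b - a)) : ℝ) • (v - u) = u + (0:ℝ) • (v - u) := by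
    rw [zero_smul, add_zero]
    rw [show u + (a + s*(b-a)) • (v-u) = (u + a • (v-u)) + s • ((u + b•(v-u)) - (u + a•(v-u))) by
      module]
    exact hus.symm
  have e1 : u + ((a + t * (b - a)) : ℝ) • (v - u) = u + (1:ℝ) • (v - u) := by
    rw [show u + (a + t*(b-a)) • (v-u) = (u + a • (v-u)) + t • ((u + b•(v-u)) - (u + a•(v-u))) by
      module, ← hvt]
    module
  have h0 := smul_dir_inj huv e0
  have h1 := smul_dir_inj huv e1
  obtain ⟨ha0, ha1⟩ := ha; obtain ⟨hb0, hb1⟩ := hb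
  obtain ⟨hs0, hs1⟩ := hs; obtain ⟨ht0, ht1⟩ := ht
  have hab0 : a = 0 ∨ b = 0 := by
    by_contra hc
    push_neg at hc
    have h'a : 0 < a := lt_of_le_of_ne ha0 (Ne.symm hc.1)
    have h'b : 0 < b := lt_of_le_of_ne hb0 (Ne.symm hc.2)
    have e : (1-s)*a + s*b = 0 := by linear_combination h0
    have t1 : 0 ≤ (1-s)*a := mul_nonneg (by linarith) h'a.le
    have t2 : 0 ≤ s*b := mul_nonneg hs0 h'b.le
    have t1' : (1-s)*a = 0 := by linarith
    have hs1' : s = 1 := by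
      rcases mul_eq_zero.1 t1' with h3 | h3 <;> linarith
    rw [hs1', one_mul] at e
    nlinarith
  have hab1 : a = 1 ∨ b = 1 := by
    by_contra hc
    push_neg at hc
    have h'a : a < 1 := lt_of_le_of_ne ha1 hc.1
    have h'b : b < 1 := lt_of_le_of_ne hb1 hc.2
    have e : (1-t)*a + t*b = 1 := by linear_combination h1
    rcases eq_or_lt_of_le ht1 with h3 | h3
    · rw [← h3] at e; nlinarith
    · have g1 : (1-t)*a ≤ (1-t)*1 := mul_le_mul_of_nonneg_left h'a.le (by linarith)
      have g2 : t*b ≤ t*1 := mul_le_mul_of_nonneg_left h'b.le ht0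
      have : (1-t)*a + t*b < 1 := by
        have g1' : (1-t)*a < (1-t)*1 := by
          apply mul_lt_mul_of_pos_left h'a (by linarith)
        nlinarith
      linarith
  rcases hab0 with h' | h'
  · have hb1' : b = 1 := by rcases hab1 with h'' | h'' <;> [linarith; exact h'']
    left
    constructor
    · rw [hua, h']; module
    · rw [hvb, hb1']; module
  · have ha1' : a = 1 := by
      rcases hab1 with h'' | h''
      · exact h''
      · exfalso
        rw [h'] at hvb
        rw [h''] at h1
        -- b = 0 and b = 1
        linarith
    right
    constructor
    · rw [hua, ha1']; module
    · rw [hvb, h']; module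

lemma extreme_singleton_left (u v : E) :
    IsExtreme ℝ (segment ℝ u v) {u} := by
  constructor
  · simp [left_mem_segment]
  · intro x1 hx1 x2 hx2 x hxu hx
    rw [mem_singleton_iff] at hxu
    rw [hxu] at hx
    clear hxu
    by_cases huv : u = v
    · rw [huv, segment_same, mem_singleton_iff] at hx1 hx2
      simp [hx1, hx2, huv]
    obtain ⟨a, ⟨ha0, ha1⟩, rfl⟩ := seg_param hx1
    obtain ⟨b, ⟨hb0, hb1⟩, rfl⟩ := seg_param hx2
    obtain ⟨s, t, hs, ht, hst, habs⟩ := hx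
    have e : u + ((s * a + t * b) : ℝ) • (v - u) = u + (0:ℝ) • (v - u) := by
      have e2 : s•(u + a•(v-u)) + t•(u + b•(v-u)) = (s+t)•u + ((s*a + t*b) : ℝ)•(v-u) := by
        module
      rw [hst, one_smul] at e2
      rw [zero_smul, add_zero, ← e2, habs]
    have h0 := smul_dir_inj huv e
    have t1 : 0 ≤ s*a := mul_nonneg hs.le ha0
    have t2 : 0 ≤ t*b := mul_nonneg ht.le hb0
    have e1 : s*a = 0 := by linarith
    have e2 : t*b = 0 := by linarith
    have ha' : a = 0 := by rcases mul_eq_zero.1 e1 with h3 | h3 <;> linarith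
    have hb' : b = 0 := by rcases mul_eq_zero.1 e2 with h3 | h3 <;> linarith
    simp [ha', hb']

lemma edge_extremePoints {S : Set E} {u v : E} (h : u ≠ v ∧ IsExtreme ℝ S (segment ℝ u v)) :
    u ∈ S.extremePoints ℝ ∧ v ∈ S.extremePoints ℝ := by
  constructor
  · rw [← isExtreme_singleton]
    exact h.2.trans (extreme_singleton_left u v)
  · rw [← isExtreme_singleton]
    refine h.2.trans ?_
    rw [segment_symm]
    exact extreme_singleton_left v u

end Seg


lemma seg_of_param {E : Type*} [AddCommGroup E] [Module ℝ E] {u v : E} {t : ℝ}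
    (ht : t ∈ Set.Icc (0:ℝ) 1) : u + t • (v - u) ∈ segment ℝ u v := by
  rw [segment_eq_image']
  exact ⟨t, ht, rfl⟩


section Scalar

lemma comb_eq_one {a b s t : ℝ} (hs : 0 < s) (ht : 0 < t) (hst : s + t = 1)
    (ha : a ≤ 1) (hb : b ≤ 1) (h : s*a + t*b = 1) : a = 1 ∧ b = 1 := by
  constructor <;> nlinarith

lemma comb_eq_zero {a b s t : ℝ} (hs : 0 < s) (ht : 0 < t) (hst : s + t = 1)
    (ha : 0 ≤ a) (hb : 0 ≤ b) (h : s*a + t*b = 0) : a = 0 ∧ b = 0 := by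
  constructor <;> nlinarith

lemma comb_eq_pair {a b a' b' s t : ℝ} (hs : 0 < s) (ht : 0 < t)
    (h1 : a' ≤ a) (h2 : b' ≤ b) (h : s*a' + t*b' = s*a + t*b) : a' = a ∧ b' = b := by
  constructor <;> nlinarith

end Scalar

section ConnRel
variable {P : Type*} [PartialOrder P]

def cR (S : Set P) : P → P → Prop :=
  fun u v => u ∈ S ∧ v ∈ S ∧ (u ≤ v ∨ v ≤ u)

lemma connIn_iff {S : Set P} : ConnIn S ↔ ∀ x ∈ S, ∀ y ∈ S, ReflTransGen (cR S) x y :=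
  Iff.rfl

end ConnRel

section OrderP
variable {P : Type*} [Fintype P] [PartialOrder P]

lemma convex_orderPolytope : Convex ℝ (orderPolytope P) := by
  intro x hx y hy s t hs ht hst
  refine ⟨fun i => ⟨?_, ?_⟩, fun i j hij => ?_⟩
  · simp only [Pi.add_apply, Pi.smul_apply, smul_eq_mul]
    nlinarith [(hx.1 i).1, (hy.1 i).1]
  · simp only [Pi.add_apply, Pi.smul_apply, smul_eq_mul]
    nlinarith [(hx.1 i).2, (hy.1 i).2]
  · simp only [Pi.add_apply, Pi.smul_apply, smul_eq_mul]
    have h1 := hx.2 i j hij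
    have h2 := hy.2 i j hij
    nlinarith

lemma rho_mem_orderPolytope {I : Set P} (hI : IsLowerSet I) : rho I ∈ orderPolytope P := by
  refine ⟨fun i => ?_, fun i j hij => ?_⟩
  · rw [rho_apply]; split <;> norm_num
  · rw [rho_apply, rho_apply]
    by_cases hj : j ∈ I
    · rw [if_pos hj, if_pos (hI hij hj)]
    · rw [if_neg hj]; split <;> norm_num

lemma orderPolytope_extremePoint {f : P → ℝ} (hf : f ∈ (orderPolytope P).extremePoints ℝ) :
    ∃ I : Set P, IsLowerSet I ∧ f = rho I := by
  obtain ⟨hfS, hfext⟩ := hf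
  have h01 : ∀ i, f i = 0 ∨ f i = 1 := by
    by_contra hc
    push_neg at hc
    obtain ⟨i, hi0, hi1⟩ := hc
    have hfi0 : 0 < f i := lt_of_le_of_ne (hfS.1 i).1 (Ne.symm hi0)
    have hfi1 : f i < 1 := lt_of_le_of_ne (hfS.1 i).2 hi1
    set T : Finset P := Finset.univ.filter (fun k => f k ≠ f i) with hT
    set ε : ℝ := min (min (f i) (1 - f i))
      (if h : T.Nonempty then T.inf' h (fun k => |f k - f i|) else 1) with hε
    have hεpos : 0 < ε := by
      apply lt_min (lt_min hfi0 (by linarith))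
      split
      · next h =>
        rw [Finset.lt_inf'_iff]
        intro k hk
        exact abs_pos.2 (sub_ne_zero.2 (Finset.mem_filter.1 hk).2)
      · norm_num
    have hgap : ∀ k, f k ≠ f i → ε ≤ |f k - f i| := by
      intro k hk
      have hkT : k ∈ T := Finset.mem_filter.2 ⟨Finset.mem_univ k, hk⟩
      have hTne : T.Nonempty := ⟨k, hkT⟩
      calc ε ≤ _ := min_le_right _ _
        _ ≤ |f k - f i| := by rw [dif_pos hTne]; exact Finset.inf'_le _ hkT
    have hεfi : ε ≤ f i := le_trans (min_le_left _ _) (min_le_left _ _)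
    have hεfi1 : ε ≤ 1 - f i := le_trans (min_le_left _ _) (min_le_right _ _)
    set g : ℝ → (P → ℝ) := fun d => fun j => if f j = f i then f j + d else f j with hg
    have hmem : ∀ d : ℝ, |d| ≤ ε → g d ∈ orderPolytope P := by
      intro d hd
      obtain ⟨hd1, hd2⟩ := abs_le.1 hd
      refine ⟨fun j => ?_, fun j k hjk => ?_⟩
      · simp only [hg]
        split
        · next hj => rw [hj]; constructor <;> linarith
        · exact hfS.1 j
      · have hmono := hfS.2 j k hjk
        simp only [hg]
        by_cases hj : f j = f i <;> by_cases hk : f k = f i <;>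
          simp only [hj, hk, if_pos, if_neg, if_true, if_false]
        · exact le_refl _
        · have hlt : f k < f i := lt_of_le_of_ne (hj ▸ hmono) hk
          have := hgap k hk
          rw [abs_of_nonpos (by linarith)] at this
          linarith
        · have hlt : f i < f j := lt_of_le_of_ne (hk ▸ hmono) (fun h => hj h.symm)
          have := hgap j hj
          rw [abs_of_nonneg (by linarith)] at this
          linarith
        · exact hmono
    have h1 : g ε ∈ orderPolytope P := hmem ε (by rw [abs_of_pos hεpos])
    have h2 : g (-ε) ∈ orderPolytope P := hmem (-ε) (by rw [abs_neg, abs_of_pos hεpos])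
    have hmid : f ∈ openSegment ℝ (g ε) (g (-ε)) := by
      refine ⟨1/2, 1/2, by norm_num, by norm_num, by norm_num, ?_⟩
      funext j
      simp only [Pi.add_apply, Pi.smul_apply, smul_eq_mul, hg]
      split <;> ring
    have := hfext h1 h2 hmid
    have := congrFun this i
    simp only [hg, if_pos rfl] at this
    linarith
  refine ⟨{j | f j = 1}, ?_, ?_⟩
  · intro a b hba ha
    have := hfS.2 b a hba
    rw [mem_setOf_eq] at ha ⊢
    rw [ha] at this
    exact le_antisymm (hfS.1 b).2 this
  · funext j
    rcases h01 j with h | h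
    · rw [h, rho_not_mem]
      simp [mem_setOf_eq, h]
    · rw [h, rho_mem]
      simpa [mem_setOf_eq] using h

end OrderP

section OrderEdge
variable {P : Type*} [Fintype P] [PartialOrder P]

lemma omega_isEdge {I J : Set P} (h : OmegaP I J) :
    rho I ≠ rho J ∧ IsExtreme ℝ (orderPolytope P) (segment ℝ (rho I) (rho J)) := by
  obtain ⟨hI, hJ, hIJ, hconn⟩ := h
  have hsub : I ⊆ J := hIJ.subset
  refine ⟨fun h => hIJ.ne (rho_inj h), ?_, ?_⟩
  · exact (convex_orderPolytope).segment_subset (rho_mem_orderPolytope hI)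
      (rho_mem_orderPolytope hJ)
  intro x1 hx1 x2 hx2 x hxseg hxopen
  obtain ⟨t, ⟨ht0, ht1⟩, hxt⟩ := seg_param hxseg
  obtain ⟨s1, s2, hs1, hs2, hs12, hcomb⟩ := hxopen
  have hpt : ∀ j, s1 * x1 j + s2 * x2 j = x j := by
    intro j; have := congrFun hcomb j; simpa using this
  have hxj : ∀ j, x j = rho I j + t * (rho J j - rho I j) := by
    intro j; rw [hxt]; simp
  obtain ⟨u₀, hu₀J, hu₀I⟩ := exists_of_ssubset hIJ
  -- values on I
  have cI : ∀ j ∈ I, x1 j = 1 ∧ x2 j = 1 := by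
    intro j hj
    have hxj1 : x j = 1 := by
      rw [hxj j, rho_mem _ hj, rho_mem _ (hsub hj)]; ring
    exact comb_eq_one hs1 hs2 hs12 (hx1.1 j).2 (hx2.1 j).2 (by rw [hpt j, hxj1])
  have cO : ∀ j, j ∉ J → x1 j = 0 ∧ x2 j = 0 := by
    intro j hj
    have hxj0 : x j = 0 := by
      rw [hxj j, rho_not_mem _ hj, rho_not_mem _ (fun hh => hj (hsub hh))]; ring
    exact comb_eq_zero hs1 hs2 hs12 (hx1.1 j).1 (hx2.1 j).1 (by rw [hpt j, hxj0])
  have hxdiff : ∀ j ∈ J \ I, x j = t := by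
    intro j hj
    rw [hxj j, rho_not_mem _ hj.2, rho_mem _ hj.1]; ring
  have cpair : ∀ u ∈ J \ I, ∀ v ∈ J \ I, u ≤ v → (x1 u = x1 v ∧ x2 u = x2 v) := by
    intro u hu v hv huv
    have h1 : x1 v ≤ x1 u := hx1.2 u v huv
    have h2 : x2 v ≤ x2 u := hx2.2 u v huv
    have heq : s1 * x1 v + s2 * x2 v = s1 * x1 u + s2 * x2 u := by
      rw [hpt u, hpt v, hxdiff u hu, hxdiff v hv]
    obtain ⟨e1, e2⟩ := comb_eq_pair hs1 hs2 h1 h2 heq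
    exact ⟨e1.symm, e2.symm⟩
  have hconst : ∀ w ∈ J \ I, x1 w = x1 u₀ ∧ x2 w = x2 u₀ := by
    intro w hw
    have hpath := hconn u₀ ⟨hu₀J, hu₀I⟩ w hw
    clear hw
    induction hpath with
    | refl => exact ⟨rfl, rfl⟩
    | tail hrest hstep ih =>
      obtain ⟨hb, hc, hcomp⟩ := hstep
      rcases hcomp with hle | hle
      · obtain ⟨e1, e2⟩ := cpair _ hb _ hc hle
        exact ⟨e1.symm.trans ih.1, e2.symm.trans ih.2⟩
      · obtain ⟨e1, e2⟩ := cpair _ hc _ hb hle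
        exact ⟨e1.trans ih.1, e2.trans ih.2⟩
  -- x1, x2 lie on the segment
  have key : ∀ y : P → ℝ, y ∈ orderPolytope P → (∀ j ∈ I, y j = 1) → (∀ j, j ∉ J → y j = 0) →
      (∀ w ∈ J \ I, y w = y u₀) → y ∈ segment ℝ (rho I) (rho J) := by
    intro y hy hyI hyO hyc
    have hc0 : 0 ≤ y u₀ := (hy.1 u₀).1
    have hc1 : y u₀ ≤ 1 := (hy.1 u₀).2
    have : y = rho I + (y u₀) • (rho J - rho I) := by
      funext j
      simp only [Pi.add_apply, Pi.smul_apply, Pi.sub_apply, smul_eq_mul]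
      by_cases hjI : j ∈ I
      · rw [hyI j hjI, rho_mem _ hjI, rho_mem _ (hsub hjI)]; ring
      · by_cases hjJ : j ∈ J
        · rw [hyc j ⟨hjJ, hjI⟩, rho_not_mem _ hjI, rho_mem _ hjJ]; ring
        · rw [hyO j hjJ, rho_not_mem _ hjJ, rho_not_mem _ (fun hh => hjJ (hsub hh))]; ring
    rw [this]
    exact seg_of_param ⟨hc0, hc1⟩
  exact key x1 hx1 (fun j hj => (cI j hj).1) (fun j hj => (cO j hj).1)
      (fun w hw => (hconst w hw).1)

lemma orderEdge_conn {I J : Set P} (hI : IsLowerSet I) (hJ : IsLowerSet J) (hIJ : I ⊂ J)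
    (hext : IsExtreme ℝ (orderPolytope P) (segment ℝ (rho I) (rho J))) :
    ConnIn (J \ I) := by
  rw [connIn_iff]
  by_contra hc
  push_neg at hc
  obtain ⟨x₀, hx₀, y₀, hy₀, hnr⟩ := hc
  set S : Set P := {z | z ∈ J \ I ∧ ReflTransGen (cR (J \ I)) x₀ z} with hSdef
  set T : Set P := (J \ I) \ S with hTdef
  have hST : ∀ z ∈ J \ I, z ∈ S ∨ z ∈ T := by
    intro z hz
    by_cases h : z ∈ S
    · exact Or.inl h
    · exact Or.inr ⟨hz, h⟩
  have hSsub : S ⊆ J \ I := fun z hz => hz.1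
  have hTsub : T ⊆ J \ I := fun z hz => hz.1
  have hSstep : ∀ z ∈ S, ∀ w ∈ J \ I, (w ≤ z ∨ z ≤ w) → w ∈ S := by
    intro z hz w hw hcomp
    exact ⟨hw, hz.2.tail ⟨hz.1, hw, hcomp.symm⟩⟩
  have hK1 : IsLowerSet (I ∪ S) := by
    intro a b hba ha
    rcases ha with ha | ha
    · exact Or.inl (hI hba ha)
    · by_cases hbI : b ∈ I
      · exact Or.inl hbI
      · have hbJ : b ∈ J := hJ hba (hSsub ha).1
        exact Or.inr (hSstep a ha b ⟨hbJ, hbI⟩ (Or.inl hba))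
  have hK2 : IsLowerSet (I ∪ T) := by
    intro a b hba ha
    rcases ha with ha | ha
    · exact Or.inl (hI hba ha)
    · by_cases hbI : b ∈ I
      · exact Or.inl hbI
      · have hbJ : b ∈ J := hJ hba (hTsub ha).1
        have hbd : b ∈ J \ I := ⟨hbJ, hbI⟩
        rcases hST b hbd with hbS | hbT
        · exfalso
          exact ha.2 (hSstep b hbS a (hTsub ha) (Or.inr hba))
        · exact Or.inr hbT
  have hx₀S : x₀ ∈ S := ⟨hx₀, ReflTransGen.refl⟩
  have hy₀T : y₀ ∈ T := ⟨hy₀, fun h => hnr h.2⟩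
  -- midpoint identity
  have hsum : ∀ j, rho (I ∪ S) j + rho (I ∪ T) j = rho I j + rho J j := by
    intro j
    by_cases hjI : j ∈ I
    · rw [rho_mem (I ∪ S) (Set.mem_union_left _ hjI), rho_mem (I ∪ T) (Set.mem_union_left _ hjI),
        rho_mem _ hjI, rho_mem _ (hIJ.subset hjI)]
    · by_cases hjJ : j ∈ J
      · have hjd : j ∈ J \ I := ⟨hjJ, hjI⟩
        rw [rho_not_mem _ hjI, rho_mem _ hjJ]
        rcases hST j hjd with hjS | hjT
        · have hnT : j ∉ I ∪ T := by
            rintro (h | h)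
            · exact hjI h
            · exact h.2 hjS
          rw [rho_mem (I ∪ S) (Set.mem_union_right _ hjS), rho_not_mem _ hnT]
          ring
        · have hnS : j ∉ I ∪ S := by
            rintro (h | h)
            · exact hjI h
            · exact hjT.2 h
          rw [rho_not_mem _ hnS, rho_mem (I ∪ T) (Set.mem_union_right _ hjT)]
      · have hnS : j ∉ I ∪ S := by
          rintro (h | h)
          · exact hjI h
          · exact hjJ (hSsub h).1
        have hnT : j ∉ I ∪ T := by
          rintro (h | h)
          · exact hjI h
          · exact hjJ (hTsub h).1
        rw [rho_not_mem _ hjI, rho_not_mem _ hjJ, rho_not_mem _ hnS, rho_not_mem _ hnT]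
  have hmid : (1/2 : ℝ) • rho (I ∪ S) + (1/2 : ℝ) • rho (I ∪ T)
      = (1/2 : ℝ) • rho I + (1/2 : ℝ) • rho J := by
    funext j
    simp only [Pi.add_apply, Pi.smul_apply, smul_eq_mul]
    have := hsum j
    linarith
  have hmidseg : (1/2 : ℝ) • rho I + (1/2 : ℝ) • rho J ∈ segment ℝ (rho I) (rho J) :=
    ⟨1/2, 1/2, by norm_num, by norm_num, by norm_num, rfl⟩
  have hopen : (1/2 : ℝ) • rho I + (1/2 : ℝ) • rho J
      ∈ openSegment ℝ (rho (I ∪ S)) (rho (I ∪ T)) :=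
    ⟨1/2, 1/2, by norm_num, by norm_num, by norm_num, hmid⟩
  have hres := hext.2 (rho_mem_orderPolytope hK1) (rho_mem_orderPolytope hK2) hmidseg hopen
  obtain ⟨c, _, hceq⟩ := seg_param hres
  have hcx : rho (I ∪ S) x₀ = rho I x₀ + c * (rho J x₀ - rho I x₀) := by
    rw [hceq]; simp
  have hcy : rho (I ∪ S) y₀ = rho I y₀ + c * (rho J y₀ - rho I y₀) := by
    rw [hceq]; simp
  rw [rho_mem (I ∪ S) (Set.mem_union_right _ hx₀S), rho_not_mem _ hx₀.2, rho_mem _ hx₀.1] at hcx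
  have hy₀K1 : y₀ ∉ I ∪ S := by
    rintro (h | h)
    · exact hy₀.2 h
    · exact hy₀T.2 h
  rw [rho_not_mem _ hy₀K1, rho_not_mem _ hy₀.2, rho_mem _ hy₀.1] at hcy
  -- hcx : 1 = 0 + c * (1 - 0), hcy : 0 = 0 + c * (1 - 0)
  have : c = 1 := by linarith
  have : c = 0 := by linarith
  linarith

lemma isEdge_omega {u v : P → ℝ}
    (h : u ≠ v ∧ IsExtreme ℝ (orderPolytope P) (segment ℝ u v)) :
    ∃ I J, OmegaP I J ∧ segment ℝ u v = segment ℝ (rho I) (rho J) := by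
  obtain ⟨hu, hv⟩ := edge_extremePoints h
  obtain ⟨I₀, hI₀, rfl⟩ := orderPolytope_extremePoint hu
  obtain ⟨J₀, hJ₀, rfl⟩ := orderPolytope_extremePoint hv
  have hne : I₀ ≠ J₀ := fun hh => h.1 (by rw [hh])
  have hcompat : I₀ ⊆ J₀ ∨ J₀ ⊆ I₀ := by
    by_contra hc
    push_neg at hc
    obtain ⟨s, hsI, hsJ⟩ := not_subset.1 hc.1
    obtain ⟨t', htJ, htI⟩ := not_subset.1 hc.2
    have h1 : rho (I₀ ∩ J₀) ∈ orderPolytope P := rho_mem_orderPolytope (hI₀.inter hJ₀)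
    have h2 : rho (I₀ ∪ J₀) ∈ orderPolytope P := rho_mem_orderPolytope (hI₀.union hJ₀)
    have hsum : ∀ j, rho (I₀ ∩ J₀) j + rho (I₀ ∪ J₀) j = rho I₀ j + rho J₀ j := by
      intro j
      by_cases hjI : j ∈ I₀ <;> by_cases hjJ : j ∈ J₀ <;>
        simp [rho_apply, hjI, hjJ]
    have hmid : (1/2 : ℝ) • rho (I₀ ∩ J₀) + (1/2 : ℝ) • rho (I₀ ∪ J₀)
        = (1/2 : ℝ) • rho I₀ + (1/2 : ℝ) • rho J₀ := by
      funext j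
      simp only [Pi.add_apply, Pi.smul_apply, smul_eq_mul]
      have := hsum j
      linarith
    have hmidseg : (1/2 : ℝ) • rho I₀ + (1/2 : ℝ) • rho J₀ ∈ segment ℝ (rho I₀) (rho J₀) :=
      ⟨1/2, 1/2, by norm_num, by norm_num, by norm_num, rfl⟩
    have hopen : (1/2 : ℝ) • rho I₀ + (1/2 : ℝ) • rho J₀
        ∈ openSegment ℝ (rho (I₀ ∩ J₀)) (rho (I₀ ∪ J₀)) :=
      ⟨1/2, 1/2, by norm_num, by norm_num, by norm_num, hmid⟩
    have hres := h.2.2 h1 h2 hmidseg hopen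
    obtain ⟨c, _, hceq⟩ := seg_param hres
    have hcx : rho (I₀ ∩ J₀) s = rho I₀ s + c * (rho J₀ s - rho I₀ s) := by
      rw [hceq]; simp
    have hcy : rho (I₀ ∩ J₀) t' = rho I₀ t' + c * (rho J₀ t' - rho I₀ t') := by
      rw [hceq]; simp
    rw [rho_not_mem _ (fun hh => hsJ hh.2), rho_mem _ hsI, rho_not_mem _ hsJ] at hcx
    rw [rho_not_mem _ (fun hh => htI hh.1), rho_not_mem _ htI, rho_mem _ htJ] at hcy
    have : c = 1 := by linarith
    have : c = 0 := by linarith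
    linarith
  rcases hcompat with hsub | hsub
  · have hss : I₀ ⊂ J₀ := ssubset_of_ne_of_subset hne hsub
    exact ⟨I₀, J₀, ⟨hI₀, hJ₀, hss, orderEdge_conn hI₀ hJ₀ hss h.2⟩, rfl⟩
  · have hss : J₀ ⊂ I₀ := ssubset_of_ne_of_subset (Ne.symm hne) hsub
    refine ⟨J₀, I₀, ⟨hJ₀, hI₀, hss, orderEdge_conn hJ₀ hI₀ hss ?_⟩, segment_symm ℝ _ _⟩
    rw [segment_symm]
    exact h.2

end OrderEdge

section MaxMin
variable {P : Type*} [PartialOrder P]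

lemma maxSet_subset (S : Set P) : maxSet S ⊆ S := fun _ h => h.1
lemma minSet_subset (S : Set P) : minSet S ⊆ S := fun _ h => h.1

lemma maxSet_antichain (S : Set P) : IsAntichain (· ≤ ·) (maxSet S) := by
  intro a ha b hb hne hab
  exact hne (ha.2 b hb.1 hab)

lemma minSet_antichain (S : Set P) : IsAntichain (· ≤ ·) (minSet S) := by
  intro a ha b hb hne hab
  exact hne ((hb.2 a ha.1 hab).symm)

variable [Fintype P]

lemma exists_le_maxSet {S : Set P} {x : P} (hx : x ∈ S) : ∃ m ∈ maxSet S, x ≤ m := by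
  obtain ⟨m, hm, hmax⟩ := Set.Finite.exists_maximalFor id {y ∈ S | x ≤ y}
    (Set.toFinite _) ⟨x, hx, le_refl x⟩
  refine ⟨m, ⟨hm.1, fun y hy hmy => ?_⟩, hm.2⟩
  exact le_antisymm hmy (hmax ⟨hy, le_trans hm.2 hmy⟩ hmy)

lemma exists_minSet_le {S : Set P} {x : P} (hx : x ∈ S) : ∃ m ∈ minSet S, m ≤ x := by
  obtain ⟨m, hm, hmin⟩ := Set.Finite.exists_minimalFor id {y ∈ S | y ≤ x}
    (Set.toFinite _) ⟨x, hx, le_refl x⟩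
  refine ⟨m, ⟨hm.1, fun y hy hym => ?_⟩, hm.2⟩
  exact le_antisymm (hmin ⟨hy, le_trans hym hm.2⟩ hym) hym

end MaxMin

section ChainP
variable {P : Type*} [Fintype P] [PartialOrder P]

lemma exists_max_chain_contains {s : Set P} (hs : IsChain (· ≤ ·) s) :
    ∃ C : Finset P, IsMaxChain (· ≤ ·) (C : Set P) ∧ s ⊆ ↑C := by
  obtain ⟨M, hM, hsub⟩ := hs.exists_maxChain
  refine ⟨(Set.toFinite M).toFinset, ?_, ?_⟩
  · rwa [Set.Finite.coe_toFinset]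
  · rwa [Set.Finite.coe_toFinset]

lemma chainPolytope_le_one {f : P → ℝ} (hf : f ∈ chainPolytope P) (i : P) : f i ≤ 1 := by
  obtain ⟨C, hC, hsub⟩ := exists_max_chain_contains
    (Set.Subsingleton.isChain (subsingleton_singleton (a := i)))
  have hiC : i ∈ C := hsub rfl
  have h1 := hf.2 C hC
  have h2 : f i ≤ ∑ j ∈ C, f j := Finset.single_le_sum (fun j _ => hf.1 j) hiC
  linarith

lemma convex_chainPolytope : Convex ℝ (chainPolytope P) := by
  intro x hx y hy s t hs ht hst
  refine ⟨fun i => ?_, fun C hC => ?_⟩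
  · simp only [Pi.add_apply, Pi.smul_apply, smul_eq_mul]
    nlinarith [hx.1 i, hy.1 i]
  · have h1 := hx.2 C hC
    have h2 := hy.2 C hC
    have : ∑ i ∈ C, (s • x + t • y) i = s * ∑ i ∈ C, x i + t * ∑ i ∈ C, y i := by
      rw [Finset.mul_sum, Finset.mul_sum, ← Finset.sum_add_distrib]
      apply Finset.sum_congr rfl
      intro i _
      simp only [Pi.add_apply, Pi.smul_apply, smul_eq_mul]
    rw [this]
    nlinarith

lemma rho_sum_card (A : Set P) (C : Finset P) :
    ∑ i ∈ C, rho A i = ((C.filter (fun i => i ∈ A)).card : ℝ) := by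
  rw [Finset.card_filter]
  push_cast
  apply Finset.sum_congr rfl
  intro i _
  rw [rho_apply]

lemma rho_mem_chainPolytope {A : Set P} (hA : IsAntichain (· ≤ ·) A) :
    rho A ∈ chainPolytope P := by
  refine ⟨fun i => by rw [rho_apply]; split <;> norm_num, fun C hC => ?_⟩
  rw [rho_sum_card]
  have : (C.filter (fun i => i ∈ A)).card ≤ 1 := by
    rw [Finset.card_le_one]
    intro a ha b hb
    obtain ⟨haC, haA⟩ := Finset.mem_filter.1 ha
    obtain ⟨hbC, hbA⟩ := Finset.mem_filter.1 hb
    by_contra hne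
    rcases hC.1 (Finset.mem_coe.2 haC) (Finset.mem_coe.2 hbC) hne with h | h
    · exact hA haA hbA hne h
    · exact hA hbA haA (Ne.symm hne) h
  exact_mod_cast this

lemma tight_chain_meets {f : P → ℝ} (hf : f ∈ chainPolytope P) {C : Finset P}
    (hC : IsMaxChain (· ≤ ·) (C : Set P)) (hsum : ∑ i ∈ C, f i = 1) :
    ∃ a ∈ C, a ∈ maxSet {i | f i ≠ 0} := by
  set T := C.filter (fun c => f c ≠ 0) with hT
  have hTne : T.Nonempty := by
    by_contra h
    rw [Finset.not_nonempty_iff_eq_empty] at h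
    have hz : ∑ i ∈ C, f i = 0 := Finset.sum_eq_zero (fun i hi => by
      by_contra hne
      have hmem : i ∈ T := Finset.mem_filter.2 ⟨hi, hne⟩
      rw [h] at hmem
      exact absurd hmem (Finset.notMem_empty i))
    linarith
  obtain ⟨x, hxT, hxmax⟩ := T.exists_maximal hTne
  obtain ⟨hxC, hxf⟩ := Finset.mem_filter.1 hxT
  by_cases hxA : x ∈ maxSet {i | f i ≠ 0}
  · exact ⟨x, hxC, hxA⟩
  exfalso
  have hxA' : ¬ (∀ y ∈ {i | f i ≠ 0}, x ≤ y → x = y) := fun h => hxA ⟨hxf, h⟩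
  push_neg at hxA'
  obtain ⟨y, hy, hxy, hne⟩ := hxA'
  have hchain : IsChain (· ≤ ·) ({c ∈ (C : Set P) | c ≤ x} ∪ {y}) := by
    intro a ha b hb hab
    rcases ha with ⟨haC, hax⟩ | ha <;> rcases hb with ⟨hbC, hbx⟩ | hb
    · exact hC.1 haC hbC hab
    · rw [mem_singleton_iff] at hb; subst hb; left; exact le_trans hax hxy
    · rw [mem_singleton_iff] at ha; subst ha; right; exact le_trans hbx hxy
    · rw [mem_singleton_iff] at ha hb; subst ha; subst hb; exact absurd rfl hab
  obtain ⟨D, hD, hDsub⟩ := exists_max_chain_contains hchain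
  have hbound := hf.2 D hD
  have hyD : y ∈ D := hDsub (Or.inr rfl)
  have hfilsub : C.filter (fun c => c ≤ x) ⊆ D := by
    intro c hc
    obtain ⟨hcC, hcx⟩ := Finset.mem_filter.1 hc
    exact Finset.mem_coe.1 (hDsub (Or.inl ⟨Finset.mem_coe.2 hcC, hcx⟩))
  have hyfil : y ∉ C.filter (fun c => c ≤ x) := by
    intro hmem
    exact hne (le_antisymm hxy (Finset.mem_filter.1 hmem).2)
  have hins : insert y (C.filter (fun c => c ≤ x)) ⊆ D := by
    intro c hc
    rcases Finset.mem_insert.1 hc with rfl | hc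
    · exact hyD
    · exact hfilsub hc
  have hsum1 : ∑ i ∈ insert y (C.filter (fun c => c ≤ x)), f i ≤ ∑ i ∈ D, f i :=
    Finset.sum_le_sum_of_subset_of_nonneg hins (fun i _ _ => hf.1 i)
  rw [Finset.sum_insert hyfil] at hsum1
  have hzero : ∑ i ∈ C.filter (fun c => ¬ c ≤ x), f i = 0 := by
    apply Finset.sum_eq_zero
    intro c hc
    obtain ⟨hcC, hcx⟩ := Finset.mem_filter.1 hc
    by_contra hfc
    have hcT : c ∈ T := Finset.mem_filter.2 ⟨hcC, hfc⟩
    have hcx' : x ≤ c := by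
      have hnec : c ≠ x := fun h => hcx (h ▸ le_refl x)
      rcases hC.1 (Finset.mem_coe.2 hcC) (Finset.mem_coe.2 hxC) hnec with h | h
      · exact absurd h hcx
      · exact h
    exact hcx (hxmax hcT hcx')
  have hsplit : ∑ i ∈ C.filter (fun c => c ≤ x), f i = 1 := by
    have := Finset.sum_filter_add_sum_filter_not C (fun c => c ≤ x) f
    rw [hzero] at this
    linarith [hsum]
  have hfy : 0 < f y := lt_of_le_of_ne (hf.1 y) (Ne.symm hy)
  linarith

lemma chainPolytope_extremePoint {f : P → ℝ} (hf : f ∈ (chainPolytope P).extremePoints ℝ) :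
    ∃ A : Set P, IsAntichain (· ≤ ·) A ∧ f = rho A := by
  obtain ⟨hfS, hfext⟩ := hf
  set A := maxSet {i | f i ≠ 0} with hA
  have hAanti : IsAntichain (· ≤ ·) A := maxSet_antichain _
  refine ⟨A, hAanti, ?_⟩
  by_contra hrne
  -- epsilon
  set mchains : Finset (Finset P) :=
    Finset.univ.filter (fun C : Finset P => IsMaxChain (· ≤ ·) (C : Set P) ∧ ∑ i ∈ C, f i < 1)
    with hmc
  set cands : Finset ℝ := insert 1 (((Finset.univ.filter (fun i : P => i ∈ A)).image f)
    ∪ (mchains.image (fun C => (1 - ∑ i ∈ C, f i)/2))) with hcands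
  have hcne : cands.Nonempty := ⟨1, Finset.mem_insert_self 1 _⟩
  set ε : ℝ := cands.min' hcne with hε
  have hεpos : 0 < ε := by
    apply (Finset.lt_min'_iff _ _).2
    intro y hy
    rcases Finset.mem_insert.1 hy with rfl | hy
    · norm_num
    rcases Finset.mem_union.1 hy with hy | hy
    · obtain ⟨i, hi, rfl⟩ := Finset.mem_image.1 hy
      have hiA : i ∈ A := (Finset.mem_filter.1 hi).2
      exact lt_of_le_of_ne (hfS.1 i) (Ne.symm hiA.1)
    · obtain ⟨C, hCm, rfl⟩ := Finset.mem_image.1 hy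
      have := (Finset.mem_filter.1 hCm).2.2
      linarith
  have hε1 : ε ≤ 1 := Finset.min'_le _ _ (Finset.mem_insert_self 1 _)
  have hεA : ∀ i ∈ A, ε ≤ f i := by
    intro i hi
    apply Finset.min'_le
    apply Finset.mem_insert_of_mem
    apply Finset.mem_union_left
    exact Finset.mem_image.2 ⟨i, Finset.mem_filter.2 ⟨Finset.mem_univ i, hi⟩, rfl⟩
  have hεC : ∀ C : Finset P, IsMaxChain (· ≤ ·) (C : Set P) → ∑ i ∈ C, f i < 1 →
      ε ≤ (1 - ∑ i ∈ C, f i)/2 := by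
    intro C h1 h2
    apply Finset.min'_le
    apply Finset.mem_insert_of_mem
    apply Finset.mem_union_right
    exact Finset.mem_image.2 ⟨C, Finset.mem_filter.2 ⟨Finset.mem_univ C, h1, h2⟩, rfl⟩
  -- perturbation
  set g : ℝ → (P → ℝ) := fun d => f + d • (rho A - f) with hg
  have hmem : ∀ d : ℝ, -ε ≤ d → d ≤ ε → g d ∈ chainPolytope P := by
    intro d hd1 hd2
    constructor
    · intro i
      simp only [hg, Pi.add_apply, Pi.smul_apply, Pi.sub_apply, smul_eq_mul]
      by_cases hiA : i ∈ A
      · rw [rho_mem _ hiA]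
        have h1 : f i ≤ 1 := chainPolytope_le_one hfS i
        have h2 : ε ≤ f i := hεA i hiA
        nlinarith
      · rw [rho_not_mem _ hiA]
        have h1 : 0 ≤ f i := hfS.1 i
        nlinarith
    · intro C hC
      have hsum : ∑ i ∈ C, g d i = ∑ i ∈ C, f i + d * (∑ i ∈ C, rho A i - ∑ i ∈ C, f i) := by
        rw [mul_sub, Finset.mul_sum, Finset.mul_sum]
        rw [← Finset.sum_sub_distrib, ← Finset.sum_add_distrib]
        apply Finset.sum_congr rfl
        intro i _
        simp only [hg, Pi.add_apply, Pi.smul_apply, Pi.sub_apply, smul_eq_mul]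
        ring
      set S := ∑ i ∈ C, f i with hS
      set k := ∑ i ∈ C, rho A i with hk
      have hS1 : S ≤ 1 := hfS.2 C hC
      have hS0 : 0 ≤ S := Finset.sum_nonneg (fun i _ => hfS.1 i)
      have hk1 : k ≤ 1 := (rho_mem_chainPolytope hAanti).2 C hC
      have hk0 : 0 ≤ k := Finset.sum_nonneg (fun i _ => (rho_mem_chainPolytope hAanti).1 i)
      rw [hsum]
      rcases eq_or_lt_of_le hS1 with hS1' | hS1'
      · -- tight chain: k = 1
        obtain ⟨a, haC, haA⟩ := tight_chain_meets hfS hC hS1'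
        have hk1' : (1:ℝ) ≤ k := by
          rw [hk, rho_sum_card]
          have : a ∈ C.filter (fun i => i ∈ A) := Finset.mem_filter.2 ⟨haC, haA⟩
          have hcard := Finset.card_pos.2 ⟨a, this⟩
          exact_mod_cast hcard
        have : k = 1 := le_antisymm hk1 hk1'
        rw [this, ← hS1']
        simp
      · have hεS := hεC C hC hS1'
        rcases le_total S k with hks | hks
        · have t1 : d * (k - S) ≤ ε * (k - S) :=
            mul_le_mul_of_nonneg_right hd2 (by linarith)
          have t2 : ε * (k - S) ≤ ε * 1 := mul_le_mul_of_nonneg_left (by linarith) hεpos.le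
          linarith
        · have t1 : d * (k - S) ≤ (-ε) * (k - S) :=
            mul_le_mul_of_nonpos_right hd1 (by linarith)
          have t2 : (-ε) * (k - S) = ε * (S - k) := by ring
          have t3 : ε * (S - k) ≤ ε * 1 := mul_le_mul_of_nonneg_left (by linarith) hεpos.le
          linarith
  have h1 : g ε ∈ chainPolytope P := hmem ε (by linarith) (le_refl _)
  have h2 : g (-ε) ∈ chainPolytope P := hmem (-ε) (by linarith) (by linarith)
  have hmid : f ∈ openSegment ℝ (g ε) (g (-ε)) := by
    refine ⟨1/2, 1/2, by norm_num, by norm_num, by norm_num, ?_⟩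
    funext j
    simp only [hg, Pi.add_apply, Pi.smul_apply, Pi.sub_apply, smul_eq_mul]
    ring
  have hfin := hfext h1 h2 hmid
  apply hrne
  funext j
  have := congrFun hfin j
  simp only [hg, Pi.add_apply, Pi.smul_apply, Pi.sub_apply, smul_eq_mul] at this
  have : ε * (rho A j - f j) = 0 := by linarith
  rcases mul_eq_zero.1 this with h | h
  · linarith
  · linarith

end ChainP

section ChainEdge
variable {P : Type*} [Fintype P] [PartialOrder P]

lemma conn_antichain {A S : Set P} (hA : IsAntichain (· ≤ ·) A) (hS : S ⊆ A)
    {x y : P} (h : ReflTransGen (cR S) x y) : x = y := by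
  induction h with
  | refl => rfl
  | tail hrest hstep ih =>
    obtain ⟨hb, hc, hcomp⟩ := hstep
    rw [ih]
    by_contra hne
    rcases hcomp with h | h
    · exact hA (hS hb) (hS hc) hne h
    · exact hA (hS hc) (hS hb) (Ne.symm hne) h

lemma psi_isEdge {A B : Set P} (h : PsiP A B) :
    rho A ≠ rho B ∧ IsExtreme ℝ (chainPolytope P) (segment ℝ (rho A) (rho B)) := by
  obtain ⟨hA, hB, hAB, hconn⟩ := h
  rw [connIn_iff] at hconn
  refine ⟨fun hh => hAB (rho_inj hh), ?_, ?_⟩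
  · exact convex_chainPolytope.segment_subset (rho_mem_chainPolytope hA)
      (rho_mem_chainPolytope hB)
  intro x1 hx1 x2 hx2 x hxseg hxopen
  obtain ⟨t, ⟨ht0, ht1⟩, hxt⟩ := seg_param hxseg
  obtain ⟨s1, s2, hs1, hs2, hs12, hcomb⟩ := hxopen
  have hpt : ∀ j, s1 * x1 j + s2 * x2 j = x j := by
    intro j; have := congrFun hcomb j; simpa using this
  have hxj : ∀ j, x j = rho A j + t * (rho B j - rho A j) := by
    intro j; rw [hxt]; simp
  -- coordinates off A ∪ B vanish
  have cO : ∀ j, j ∉ A → j ∉ B → x1 j = 0 ∧ x2 j = 0 := by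
    intro j hjA hjB
    have hxj0 : x j = 0 := by rw [hxj j, rho_not_mem _ hjA, rho_not_mem _ hjB]; ring
    exact comb_eq_zero hs1 hs2 hs12 (hx1.1 j) (hx2.1 j) (by rw [hpt j, hxj0])
  have cI : ∀ j, j ∈ A → j ∈ B → x1 j = 1 ∧ x2 j = 1 := by
    intro j hjA hjB
    have hxj1 : x j = 1 := by rw [hxj j, rho_mem _ hjA, rho_mem _ hjB]; ring
    exact comb_eq_one hs1 hs2 hs12 (chainPolytope_le_one hx1 j)
      (chainPolytope_le_one hx2 j) (by rw [hpt j, hxj1])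
  -- cross pairs sum to 1
  have cross : ∀ u ∈ A \ B, ∀ v ∈ B \ A, (u ≤ v ∨ v ≤ u) →
      x1 u + x1 v = 1 ∧ x2 u + x2 v = 1 := by
    intro u hu v hv hcomp
    have hne : u ≠ v := fun hh => hv.2 (hh ▸ hu.1)
    have hchain : IsChain (· ≤ ·) ({u, v} : Set P) := by
      intro a ha b hb hab
      rcases ha with rfl | ha <;> rcases hb with rfl | hb
      · exact absurd rfl hab
      · rw [mem_singleton_iff] at hb; subst hb; exact hcomp
      · rw [mem_singleton_iff] at ha; subst ha; exact hcomp.symm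
      · rw [mem_singleton_iff] at ha hb; subst ha; subst hb; exact absurd rfl hab
    obtain ⟨D, hD, hDsub⟩ := exists_max_chain_contains hchain
    have huD : u ∈ D := hDsub (Or.inl rfl)
    have hvD : v ∈ D := hDsub (Or.inr rfl)
    have hother : ∀ w ∈ D, w ≠ u → w ≠ v → w ∉ A ∧ w ∉ B := by
      intro w hwD hwu hwv
      constructor
      · intro hwA
        rcases hD.1 (Finset.mem_coe.2 hwD) (Finset.mem_coe.2 huD) hwu with h | h
        · exact hA hwA hu.1 hwu h
        · exact hA hu.1 hwA (Ne.symm hwu) h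
      · intro hwB
        rcases hD.1 (Finset.mem_coe.2 hwD) (Finset.mem_coe.2 hvD) hwv with h | h
        · exact hB hwB hv.1 hwv h
        · exact hB hv.1 hwB (Ne.symm hwv) h
    have hpair : ({u, v} : Finset P) ⊆ D := by
      intro c hc
      rcases Finset.mem_insert.1 hc with rfl | hc
      · exact huD
      · rw [Finset.mem_singleton] at hc; subst hc; exact hvD
    have hsplit : ∀ y : P → ℝ, (∀ w ∈ D, w ≠ u → w ≠ v → y w = 0) →
        ∑ i ∈ D, y i = y u + y v := by
      intro y hy
      rw [← Finset.sum_sdiff hpair, Finset.sum_pair hne]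
      have : ∑ i ∈ D \ {u, v}, y i = 0 := by
        apply Finset.sum_eq_zero
        intro w hw
        obtain ⟨hwD, hwnot⟩ := Finset.mem_sdiff.1 hw
        rw [Finset.mem_insert, Finset.mem_singleton] at hwnot
        push_neg at hwnot
        exact hy w hwD hwnot.1 hwnot.2
      rw [this]; ring
    -- x sums to 1 on D
    have hxw : ∀ w ∈ D, w ≠ u → w ≠ v → x w = 0 := by
      intro w hwD hwu hwv
      obtain ⟨h1, h2⟩ := hother w hwD hwu hwv
      rw [hxj w, rho_not_mem _ h1, rho_not_mem _ h2]; ring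
    have hxsum : ∑ i ∈ D, x i = 1 := by
      rw [hsplit x hxw, hxj u, hxj v, rho_mem _ hu.1, rho_not_mem _ hu.2,
        rho_mem _ hv.1, rho_not_mem _ hv.2]
      ring
    have hx1w : ∀ w ∈ D, w ≠ u → w ≠ v → x1 w = 0 := by
      intro w hwD hwu hwv
      obtain ⟨h1, h2⟩ := hother w hwD hwu hwv
      exact (cO w h1 h2).1
    have hx2w : ∀ w ∈ D, w ≠ u → w ≠ v → x2 w = 0 := by
      intro w hwD hwu hwv
      obtain ⟨h1, h2⟩ := hother w hwD hwu hwv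
      exact (cO w h1 h2).2
    have hsum12 : s1 * ∑ i ∈ D, x1 i + s2 * ∑ i ∈ D, x2 i = 1 := by
      rw [Finset.mul_sum, Finset.mul_sum, ← Finset.sum_add_distrib]
      rw [← hxsum]
      apply Finset.sum_congr rfl
      intro i _
      exact hpt i
    obtain ⟨e1, e2⟩ := comb_eq_one hs1 hs2 hs12 (hx1.2 D hD) (hx2.2 D hD) hsum12
    rw [hsplit x1 hx1w] at e1
    rw [hsplit x2 hx2w] at e2
    exact ⟨e1, e2⟩
  -- constancy on the symmetric difference
  have main : ∀ y : P → ℝ, (∀ j, j ∉ A → j ∉ B → y j = 0) → (∀ j, j ∈ A → j ∈ B → y j = 1) →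
      (∀ u ∈ A \ B, ∀ v ∈ B \ A, (u ≤ v ∨ v ≤ u) → y u + y v = 1) →
      (∀ j, 0 ≤ y j) → (∀ j, y j ≤ 1) →
      y ∈ segment ℝ (rho A) (rho B) := by
    intro y hyO hyI hycross hy0 hy1
    have hkey : ∃ c, 0 ≤ c ∧ c ≤ 1 ∧ (∀ u ∈ A \ B, y u = c) ∧ (∀ v ∈ B \ A, y v = 1 - c) := by
      by_cases hABe : (A \ B).Nonempty
      · obtain ⟨u₀, hu₀⟩ := hABe
        refine ⟨y u₀, hy0 u₀, hy1 u₀, ?_⟩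
        have hstep : ∀ w ∈ (A \ B) ∪ (B \ A),
            ((w ∈ A \ B → y w = y u₀) ∧ (w ∈ B \ A → y w = 1 - y u₀)) := by
          intro w hw
          have hpath := hconn u₀ (Or.inl hu₀) w hw
          clear hw
          induction hpath with
          | refl =>
            exact ⟨fun _ => rfl, fun hw => absurd hu₀.1 hw.2⟩
          | tail hrest hstep ih =>
            rename_i b c
            obtain ⟨hb, hc, hcomp⟩ := hstep
            rcases hb with hbAB | hbBA <;> rcases hc with hcAB | hcBA
            · have hbc : b = c := by
                by_contra hne
                rcases hcomp with hcm | hcm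
                · exact hA hbAB.1 hcAB.1 hne hcm
                · exact hA hcAB.1 hbAB.1 (Ne.symm hne) hcm
              rw [← hbc]
              exact ih
            · have hsum := hycross _ hbAB _ hcBA hcomp
              have hyb := ih.1 hbAB
              refine ⟨fun h => absurd h.1 hcBA.2, fun _ => by linarith⟩
            · have hsum := hycross _ hcAB _ hbBA hcomp.symm
              have hyb := ih.2 hbBA
              refine ⟨fun _ => by linarith, fun h => absurd h.1 hcAB.2⟩
            · have hbc : b = c := by
                by_contra hne
                rcases hcomp with hcm | hcm
                · exact hB hbBA.1 hcBA.1 hne hcm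
                · exact hB hcBA.1 hbBA.1 (Ne.symm hne) hcm
              rw [← hbc]
              exact ih
        exact ⟨fun u hu => (hstep u (Or.inl hu)).1 hu, fun v hv => (hstep v (Or.inr hv)).2 hv⟩
      · -- A \ B empty
        rw [Set.not_nonempty_iff_eq_empty] at hABe
        have hBA : (B \ A).Nonempty := by
          rcases Set.eq_empty_or_nonempty (B \ A) with h | h
          · exfalso
            apply hAB
            apply Set.Subset.antisymm
            · intro a ha
              by_contra hb
              exact absurd (show a ∈ A \ B from ⟨ha, hb⟩) (by rw [hABe]; exact Set.notMem_empty a)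
            · intro b hb
              by_contra ha
              exact absurd (show b ∈ B \ A from ⟨hb, ha⟩) (by rw [h]; exact Set.notMem_empty b)
          · exact h
        obtain ⟨v₀, hv₀⟩ := hBA
        have hsingle : ∀ v ∈ B \ A, v = v₀ := by
          intro v hv
          have hpath := hconn v (by rw [hABe]; exact Or.inr hv) v₀ (by rw [hABe]; exact Or.inr hv₀)
          have hsub : ((A \ B) ∪ (B \ A)) ⊆ B := by
            rw [hABe]
            rintro z (hz | hz)
            · exact absurd hz (Set.notMem_empty z)
            · exact hz.1
          exact conn_antichain hB hsub hpath
        refine ⟨1 - y v₀, by linarith [hy1 v₀], by linarith [hy0 v₀], ?_, ?_⟩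
        · intro u hu
          exact absurd hu (by rw [hABe]; exact Set.notMem_empty u)
        · intro v hv
          rw [hsingle v hv]; ring
    obtain ⟨c, hc0, hc1, hcA, hcB⟩ := hkey
    have : y = rho A + (1 - c) • (rho B - rho A) := by
      funext j
      simp only [Pi.add_apply, Pi.smul_apply, Pi.sub_apply, smul_eq_mul]
      by_cases hjA : j ∈ A <;> by_cases hjB : j ∈ B
      · rw [hyI j hjA hjB, rho_mem _ hjA, rho_mem _ hjB]; ring
      · rw [hcA j ⟨hjA, hjB⟩, rho_mem _ hjA, rho_not_mem _ hjB]; ring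
      · rw [hcB j ⟨hjB, hjA⟩, rho_not_mem _ hjA, rho_mem _ hjB]; ring
      · rw [hyO j hjA hjB, rho_not_mem _ hjA, rho_not_mem _ hjB]; ring
    rw [this]
    exact seg_of_param ⟨by linarith, by linarith⟩
  exact main x1 (fun j h1 h2 => (cO j h1 h2).1) (fun j h1 h2 => (cI j h1 h2).1)
      (fun u hu v hv hc => (cross u hu v hv hc).1) (fun j => (hx1.1 j)) (chainPolytope_le_one hx1)

end ChainEdge

section ChainEdge2
variable {P : Type*} [Fintype P] [PartialOrder P]

lemma isEdge_psi {u v : P → ℝ}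
    (h : u ≠ v ∧ IsExtreme ℝ (chainPolytope P) (segment ℝ u v)) :
    ∃ X Y : Set P, PsiP X Y ∧ u = rho X ∧ v = rho Y := by
  obtain ⟨hu, hv⟩ := edge_extremePoints h
  obtain ⟨X, hX, rfl⟩ := chainPolytope_extremePoint hu
  obtain ⟨Y, hY, rfl⟩ := chainPolytope_extremePoint hv
  have hne : X ≠ Y := fun hh => h.1 (by rw [hh])
  refine ⟨X, Y, ⟨hX, hY, hne, ?_⟩, rfl, rfl⟩
  rw [connIn_iff]
  by_contra hc
  push_neg at hc
  obtain ⟨x₀, hx₀, y₀, hy₀, hnr⟩ := hc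
  set Δ : Set P := (X \ Y) ∪ (Y \ X) with hΔ
  set S : Set P := {z | z ∈ Δ ∧ ReflTransGen (cR Δ) x₀ z} with hSdef
  set T : Set P := Δ \ S with hTdef
  have hSsub : S ⊆ Δ := fun z hz => hz.1
  have hTsub : T ⊆ Δ := fun z hz => hz.1
  have hST : ∀ z ∈ Δ, z ∈ S ∨ z ∈ T := by
    intro z hz
    by_cases hzS : z ∈ S
    · exact Or.inl hzS
    · exact Or.inr ⟨hz, hzS⟩
  have hSstep : ∀ z ∈ S, ∀ w ∈ Δ, (w ≤ z ∨ z ≤ w) → w ∈ S := by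
    intro z hz w hw hcomp
    exact ⟨hw, hz.2.tail ⟨hz.1, hw, hcomp.symm⟩⟩
  have hx₀S : x₀ ∈ S := ⟨hx₀, ReflTransGen.refl⟩
  have hy₀T : y₀ ∈ T := ⟨hy₀, fun hh => hnr hh.2⟩
  -- swapped antichains
  set A' : Set P := (X ∩ Y) ∪ (S ∩ X) ∪ (T ∩ Y) with hA'
  set B' : Set P := (X ∩ Y) ∪ (S ∩ Y) ∪ (T ∩ X) with hB'
  -- any element of Δ comparable to an element of Δ lies in same S/T part
  have hanti : ∀ W : Set P, W = (X ∩ Y) ∪ (S ∩ X) ∪ (T ∩ Y) ∨ W = (X ∩ Y) ∪ (S ∩ Y) ∪ (T ∩ X) →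
      IsAntichain (· ≤ ·) W := by
    intro W hW a ha b hb hneab hab
    -- reduce to cases
    have hmem : ∀ c ∈ W, c ∈ X ∪ Y := by
      intro c hc
      rcases hW with rfl | rfl
      · rcases hc with (hc | hc) | hc
        · exact Or.inl hc.1
        · exact Or.inl hc.2
        · exact Or.inr hc.2
      · rcases hc with (hc | hc) | hc
        · exact Or.inl hc.1
        · exact Or.inr hc.2
        · exact Or.inl hc.2
    -- both in X or both in Y impossible; cross pairs in different components impossible
    have hXcase : a ∈ X → b ∈ X → False := fun ha' hb' => hX ha' hb' hneab hab
    have hYcase : a ∈ Y → b ∈ Y → False := fun ha' hb' => hY ha' hb' hneab hab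
    -- so a, b are in Δ on opposite sides, hence comparable elements of Δ: same S/T part
    have haΔ : a ∈ X \ Y ∨ a ∈ Y \ X ∨ (a ∈ X ∩ Y) := by
      rcases hmem a ha with h1 | h1
      · by_cases h2 : a ∈ Y
        · exact Or.inr (Or.inr ⟨h1, h2⟩)
        · exact Or.inl ⟨h1, h2⟩
      · by_cases h2 : a ∈ X
        · exact Or.inr (Or.inr ⟨h2, h1⟩)
        · exact Or.inr (Or.inl ⟨h1, h2⟩)
    have hbΔ : b ∈ X \ Y ∨ b ∈ Y \ X ∨ (b ∈ X ∩ Y) := by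
      rcases hmem b hb with h1 | h1
      · by_cases h2 : b ∈ Y
        · exact Or.inr (Or.inr ⟨h1, h2⟩)
        · exact Or.inl ⟨h1, h2⟩
      · by_cases h2 : b ∈ X
        · exact Or.inr (Or.inr ⟨h2, h1⟩)
        · exact Or.inr (Or.inl ⟨h1, h2⟩)
    rcases haΔ with haD | haD | haD
    · rcases hbΔ with hbD | hbD | hbD
      · exact hXcase haD.1 hbD.1
      · -- a ∈ X\Y, b ∈ Y\X : same part
        have hsame : (a ∈ S ∧ b ∈ S) ∨ (a ∈ T ∧ b ∈ T) := by
          have haΔ' : a ∈ Δ := Or.inl haD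
          have hbΔ' : b ∈ Δ := Or.inr hbD
          rcases hST a haΔ' with haS | haT
          · exact Or.inl ⟨haS, hSstep a haS b hbΔ' (Or.inr hab)⟩
          · rcases hST b hbΔ' with hbS | hbT
            · exact absurd (hSstep b hbS a haΔ' (Or.inl hab)) haT.2
            · exact Or.inr ⟨haT, hbT⟩
        -- membership in W forces opposite parts
        rcases hW with rfl | rfl
        · -- W = (X∩Y) ∪ (S∩X) ∪ (T∩Y)
          have ha' : a ∈ S := by
            rcases ha with (h' | h') | h'
            · exact absurd h'.2 haD.2
            · exact h'.1
            · exact absurd h'.2 haD.2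
          have hb' : b ∈ T := by
            rcases hb with (h' | h') | h'
            · exact absurd h'.1 hbD.2
            · exact absurd h'.2 hbD.2
            · exact h'.1
          rcases hsame with ⟨_, h2⟩ | ⟨h1, _⟩
          · exact hb'.2 h2
          · exact h1.2 ha'
        · have ha' : a ∈ T := by
            rcases ha with (h' | h') | h'
            · exact absurd h'.2 haD.2
            · exact absurd h'.2 haD.2
            · exact h'.1
          have hb' : b ∈ S := by
            rcases hb with (h' | h') | h'
            · exact absurd h'.1 hbD.2
            · exact h'.1
            · exact absurd h'.2 hbD.2
          rcases hsame with ⟨h1, _⟩ | ⟨_, h2⟩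
          · exact ha'.2 h1
          · exact h2.2 hb'
      · exact hXcase haD.1 hbD.1
    · rcases hbΔ with hbD | hbD | hbD
      · -- a ∈ Y\X, b ∈ X\Y
        have hsame : (a ∈ S ∧ b ∈ S) ∨ (a ∈ T ∧ b ∈ T) := by
          have haΔ' : a ∈ Δ := Or.inr haD
          have hbΔ' : b ∈ Δ := Or.inl hbD
          rcases hST a haΔ' with haS | haT
          · exact Or.inl ⟨haS, hSstep a haS b hbΔ' (Or.inr hab)⟩
          · rcases hST b hbΔ' with hbS | hbT
            · exact absurd (hSstep b hbS a haΔ' (Or.inl hab)) haT.2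
            · exact Or.inr ⟨haT, hbT⟩
        rcases hW with rfl | rfl
        · have ha' : a ∈ T := by
            rcases ha with (h' | h') | h'
            · exact absurd h'.1 haD.2
            · exact absurd h'.2 haD.2
            · exact h'.1
          have hb' : b ∈ S := by
            rcases hb with (h' | h') | h'
            · exact absurd h'.2 hbD.2
            · exact h'.1
            · exact absurd h'.2 hbD.2
          rcases hsame with ⟨h1, _⟩ | ⟨_, h2⟩
          · exact ha'.2 h1
          · exact h2.2 hb'
        · have ha' : a ∈ S := by
            rcases ha with (h' | h') | h'
            · exact absurd h'.1 haD.2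
            · exact h'.1
            · exact absurd h'.2 haD.2
          have hb' : b ∈ T := by
            rcases hb with (h' | h') | h'
            · exact absurd h'.2 hbD.2
            · exact absurd h'.2 hbD.2
            · exact h'.1
          rcases hsame with ⟨_, h2⟩ | ⟨h1, _⟩
          · exact hb'.2 h2
          · exact h1.2 ha'
      · exact hYcase haD.1 hbD.1
      · exact hYcase haD.1 hbD.2
    · rcases hbΔ with hbD | hbD | hbD
      · exact hXcase haD.1 hbD.1
      · exact hYcase haD.2 hbD.1
      · exact hXcase haD.1 hbD.1
  have hA'anti : IsAntichain (· ≤ ·) A' := hanti A' (Or.inl rfl)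
  have hB'anti : IsAntichain (· ≤ ·) B' := hanti B' (Or.inr rfl)
  -- indicator sum identity
  have hsum : ∀ j, rho A' j + rho B' j = rho X j + rho Y j := by
    intro j
    by_cases hjX : j ∈ X <;> by_cases hjY : j ∈ Y
    · have h1 : j ∈ A' := Or.inl (Or.inl ⟨hjX, hjY⟩)
      have h2 : j ∈ B' := Or.inl (Or.inl ⟨hjX, hjY⟩)
      rw [rho_mem _ h1, rho_mem _ h2, rho_mem _ hjX, rho_mem _ hjY]
    · have hjΔ : j ∈ Δ := Or.inl ⟨hjX, hjY⟩
      rcases hST j hjΔ with hjS | hjT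
      · have h1 : j ∈ A' := Or.inl (Or.inr ⟨hjS, hjX⟩)
        have h2 : j ∉ B' := by
          rintro ((h' | h') | h')
          · exact hjY h'.2
          · exact hjY h'.2
          · exact h'.1.2 hjS
        rw [rho_mem _ h1, rho_not_mem _ h2, rho_mem _ hjX, rho_not_mem _ hjY]
      · have h1 : j ∉ A' := by
          rintro ((h' | h') | h')
          · exact hjY h'.2
          · exact hjT.2 h'.1
          · exact hjY h'.2
        have h2 : j ∈ B' := Or.inr ⟨hjT, hjX⟩
        rw [rho_mem _ h2, rho_not_mem _ h1, rho_mem _ hjX, rho_not_mem _ hjY]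
        ring
    · have hjΔ : j ∈ Δ := Or.inr ⟨hjY, hjX⟩
      rcases hST j hjΔ with hjS | hjT
      · have h1 : j ∉ A' := by
          rintro ((h' | h') | h')
          · exact hjX h'.1
          · exact hjX h'.2
          · exact h'.1.2 hjS
        have h2 : j ∈ B' := Or.inl (Or.inr ⟨hjS, hjY⟩)
        rw [rho_mem _ h2, rho_not_mem _ h1, rho_not_mem _ hjX, rho_mem _ hjY]
      · have h1 : j ∈ A' := Or.inr ⟨hjT, hjY⟩
        have h2 : j ∉ B' := by
          rintro ((h' | h') | h')
          · exact hjX h'.1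
          · exact hjT.2 h'.1
          · exact hjX h'.2
        rw [rho_mem _ h1, rho_not_mem _ h2, rho_not_mem _ hjX, rho_mem _ hjY]
        ring
    · have h1 : j ∉ A' := by
        rintro ((h' | h') | h')
        · exact hjX h'.1
        · exact hjX h'.2
        · exact hjY h'.2
      have h2 : j ∉ B' := by
        rintro ((h' | h') | h')
        · exact hjX h'.1
        · exact hjY h'.2
        · exact hjX h'.2
      rw [rho_not_mem _ h1, rho_not_mem _ h2, rho_not_mem _ hjX, rho_not_mem _ hjY]
  have hmid : (1/2 : ℝ) • rho A' + (1/2 : ℝ) • rho B' = (1/2 : ℝ) • rho X + (1/2 : ℝ) • rho Y := by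
    funext j
    simp only [Pi.add_apply, Pi.smul_apply, smul_eq_mul]
    have := hsum j
    linarith
  have hmidseg : (1/2 : ℝ) • rho X + (1/2 : ℝ) • rho Y ∈ segment ℝ (rho X) (rho Y) :=
    ⟨1/2, 1/2, by norm_num, by norm_num, by norm_num, rfl⟩
  have hopen : (1/2 : ℝ) • rho X + (1/2 : ℝ) • rho Y ∈ openSegment ℝ (rho A') (rho B') :=
    ⟨1/2, 1/2, by norm_num, by norm_num, by norm_num, hmid⟩
  have hres := h.2.2 (rho_mem_chainPolytope hA'anti) (rho_mem_chainPolytope hB'anti)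
    hmidseg hopen
  obtain ⟨c, _, hceq⟩ := seg_param hres
  have hcx : rho A' x₀ = rho X x₀ + c * (rho Y x₀ - rho X x₀) := by rw [hceq]; simp
  have hcy : rho A' y₀ = rho X y₀ + c * (rho Y y₀ - rho X y₀) := by rw [hceq]; simp
  have hc0 : c = 0 := by
    rcases hx₀ with hx' | hx'
    · have h1 : x₀ ∈ A' := Or.inl (Or.inr ⟨hx₀S, hx'.1⟩)
      rw [rho_mem _ h1, rho_mem _ hx'.1, rho_not_mem _ hx'.2] at hcx
      linarith
    · have h1 : x₀ ∈ B' := Or.inl (Or.inr ⟨hx₀S, hx'.1⟩)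
      have h2 : x₀ ∉ A' := by
        rintro ((h' | h') | h')
        · exact hx'.2 h'.1
        · exact hx'.2 h'.2
        · exact h'.1.2 hx₀S
      rw [rho_not_mem _ h2, rho_not_mem _ hx'.2, rho_mem _ hx'.1] at hcx
      linarith
  rcases hy₀ with hy' | hy'
  · have h1 : y₀ ∉ A' := by
      rintro ((h' | h') | h')
      · exact hy'.2 h'.2
      · exact hy₀T.2 h'.1
      · exact hy'.2 h'.2
    rw [rho_not_mem _ h1, rho_mem _ hy'.1, rho_not_mem _ hy'.2] at hcy
    linarith
  · have h1 : y₀ ∈ A' := Or.inr ⟨hy₀T, hy'.1⟩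
    rw [rho_mem _ h1, rho_not_mem _ hy'.2, rho_mem _ hy'.1] at hcy
    linarith

end ChainEdge2

section RTG

lemma rtg_first_step {α : Type*} {r : α → α → Prop} {x y : α}
    (h : ReflTransGen r x y) (hxy : x ≠ y) : ∃ z, r x z ∧ x ≠ z := by
  revert hxy
  induction h using Relation.ReflTransGen.head_induction_on with
  | refl => intro hxy; exact absurd rfl hxy
  | head h' hrest ih =>
    rename_i a c
    intro hay
    by_cases hac : a = c
    · subst hac
      exact ih hay
    · exact ⟨c, h', hac⟩

lemma rtg_mono {α : Type*} {S S' : Set α} [PartialOrder α] (hsub : S ⊆ S') {x y : α}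
    (h : ReflTransGen (cR S) x y) : ReflTransGen (cR S') x y := by
  apply ReflTransGen.mono (fun u v huv => ?_) _ _ h
  exact ⟨hsub huv.1, hsub huv.2.1, huv.2.2⟩

end RTG

section OmegaBasic
variable {P : Type*} [Fintype P] [PartialOrder P] {I J : Set P}

lemma omega_S_nonempty (h : OmegaP I J) : (J \ I).Nonempty := by
  obtain ⟨x, hx1, hx2⟩ := exists_of_ssubset h.2.2.1
  exact ⟨x, hx1, hx2⟩

lemma omega_S_up (h : OmegaP I J) : ∀ x ∈ J, ∀ y ∈ J \ I, y ≤ x → x ∈ J \ I := by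
  intro x hx y hy hyx
  refine ⟨hx, fun hxI => hy.2 (h.1 hyx hxI)⟩

lemma omega_exists_above (h : OmegaP I J) :
    ∀ x ∈ J \ I, ∃ a, a ∈ maxSet J ∧ a ∈ J \ I ∧ x ≤ a := by
  intro x hx
  obtain ⟨a, ha, hxa⟩ := exists_le_maxSet hx.1
  refine ⟨a, ha, ⟨ha.1, fun haI => hx.2 (h.1 hxa haI)⟩, hxa⟩

lemma maxJ_diff_sub (h : OmegaP I J) : maxSet J \ maxSet I ⊆ J \ I := by
  rintro x ⟨hxJ, hxI⟩
  refine ⟨hxJ.1, fun hxI' => hxI ⟨hxI', fun y hy hxy => hxJ.2 y (h.2.2.1.subset hy) hxy⟩⟩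

lemma not_maxI_of_S {x : P} (h : OmegaP I J) (hx : x ∈ J \ I) : x ∉ maxSet I :=
  fun hh => hx.2 hh.1

lemma maxJ_diff_eq (h : OmegaP I J) : maxSet J \ maxSet I = maxSet J ∩ (J \ I) := by
  ext x
  constructor
  · intro hx
    exact ⟨hx.1, maxJ_diff_sub h hx⟩
  · rintro ⟨hx1, hx2⟩
    exact ⟨hx1, not_maxI_of_S h hx2⟩

lemma maxJ_diff_nonempty (h : OmegaP I J) : (maxSet J \ maxSet I).Nonempty := by
  obtain ⟨x, hx⟩ := omega_S_nonempty h
  obtain ⟨a, ha, haS, _⟩ := omega_exists_above h x hx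
  exact ⟨a, ha, not_maxI_of_S h haS⟩

lemma lower_eq_lc {J : Set P} (hJ : IsLowerSet J) : J = {x | ∃ a ∈ maxSet J, x ≤ a} := by
  ext x
  constructor
  · intro hx
    obtain ⟨m, hm, hxm⟩ := exists_le_maxSet hx
    exact ⟨m, hm, hxm⟩
  · rintro ⟨a, ha, hxa⟩
    exact hJ hxa ha.1

lemma maxSet_lc {A : Set P} (hA : IsAntichain (· ≤ ·) A) :
    maxSet {x | ∃ a ∈ A, x ≤ a} = A := by
  ext x
  constructor
  · rintro ⟨⟨a, ha, hxa⟩, hmax⟩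
    have := hmax a ⟨a, ha, le_refl a⟩ hxa
    rwa [this]
  · intro hx
    refine ⟨⟨x, hx, le_refl x⟩, ?_⟩
    rintro y ⟨a, ha, hya⟩ hxy
    have hxa : x ≤ a := le_trans hxy hya
    have : x = a := by
      by_contra hne
      exact hA hx ha hne hxa
    rw [this] at hxy ⊢
    exact le_antisymm hya hxy |>.symm

lemma lc_lower (A : Set P) : IsLowerSet {x | ∃ a ∈ A, x ≤ a} := by
  rintro a b hba ⟨c, hc, hac⟩
  exact ⟨c, hc, le_trans hba hac⟩

end OmegaBasic

section Regimes
variable {P : Type*} [Fintype P] [PartialOrder P] {I J : Set P}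

lemma omega1 (h : OmegaP I J) {v : P} (hv : J \ I = {v}) :
    v ∈ maxSet J ∧ FmapB I J = maxSet J \ {v} := by
  have hvS : v ∈ J \ I := by rw [hv]; rfl
  have hvmax : v ∈ maxSet J := by
    refine ⟨hvS.1, fun y hy hvy => ?_⟩
    by_contra hne
    have : y ∈ J \ I := omega_S_up h y hy v hvS hvy
    rw [hv, mem_singleton_iff] at this
    exact hne this.symm
  refine ⟨hvmax, ?_⟩
  have hco : (J \ I).ncard = 1 := by rw [hv]; exact Set.ncard_singleton v
  rw [FmapB, if_pos hco, Set.empty_union]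
  ext x
  constructor
  · rintro ⟨hxI, hxJ⟩
    refine ⟨hxJ, fun hxv => ?_⟩
    rw [mem_singleton_iff] at hxv
    subst hxv
    exact hvS.2 hxI.1
  · rintro ⟨hxJ, hxv⟩
    rw [mem_singleton_iff] at hxv
    have hxI : x ∈ I := by
      by_contra hxI
      have : x ∈ J \ I := ⟨hxJ.1, hxI⟩
      rw [hv, mem_singleton_iff] at this
      exact hxv this
    refine ⟨⟨hxI, fun y hy hxy => hxJ.2 y (h.2.2.1.subset hy) hxy⟩, hxJ⟩

lemma omega1_diff (h : OmegaP I J) {v : P} (hv : J \ I = {v}) :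
    FmapA I J \ FmapB I J = {v} ∧ FmapB I J \ FmapA I J = ∅ := by
  obtain ⟨hvmax, hB⟩ := omega1 h hv
  rw [hB, FmapA]
  constructor
  · ext x
    simp only [Set.mem_diff, Set.mem_singleton_iff]
    constructor
    · rintro ⟨hx1, hx2⟩
      by_contra hne
      exact hx2 ⟨hx1, hne⟩
    · rintro rfl
      exact ⟨hvmax, fun hh => hh.2 rfl⟩
  · ext x
    simp only [Set.mem_diff, Set.mem_empty_iff_false, iff_false]
    rintro ⟨⟨hx1, _⟩, hx2⟩
    exact hx2 hx1

lemma omega2_two (h : OmegaP I J) (h1 : (J \ I).ncard ≠ 1) :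
    ∀ v ∈ J \ I, ∃ w ∈ J \ I, w ≠ v := by
  intro v hv
  by_contra hc
  push_neg at hc
  apply h1
  have : J \ I = {v} := by
    ext x
    constructor
    · intro hx; exact hc x hx
    · intro hx; rw [mem_singleton_iff] at hx; subst hx; exact hv
  rw [this]
  exact Set.ncard_singleton v

lemma omega2_min_notmax (h : OmegaP I J) (h1 : (J \ I).ncard ≠ 1) :
    ∀ v, v ∈ minSet (J \ I) → v ∉ maxSet J := by
  rintro v hvmin hvmax
  have hvS : v ∈ J \ I := hvmin.1
  obtain ⟨w, hw, hwv⟩ := omega2_two h h1 v hvS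
  have hpath := h.2.2.2 v hvS w hw
  obtain ⟨z, hz, hvz⟩ := rtg_first_step hpath (Ne.symm hwv)
  obtain ⟨_, hzS, hcomp⟩ := hz
  rcases hcomp with hle | hle
  · exact hvz (hvmax.2 z hzS.1 hle)
  · exact hvz (hvmin.2 z hzS hle)

lemma omega2_B (h1 : (J \ I).ncard ≠ 1) :
    FmapB I J = minSet (J \ I) ∪ (maxSet I ∩ maxSet J) := by
  rw [FmapB, if_neg h1]

lemma omega2_AmB (h : OmegaP I J) (h1 : (J \ I).ncard ≠ 1) :
    FmapA I J \ FmapB I J = maxSet J \ maxSet I := by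
  rw [omega2_B h1, FmapA]
  ext x
  simp only [Set.mem_diff, Set.mem_union, Set.mem_inter_iff]
  constructor
  · rintro ⟨hx1, hx2⟩
    push_neg at hx2
    refine ⟨hx1, fun hxI => (hx2.2 hxI) hx1⟩
  · rintro ⟨hx1, hx2⟩
    refine ⟨hx1, ?_⟩
    push_neg
    exact ⟨fun hmin => absurd hx1 (omega2_min_notmax h h1 x hmin), fun hxI => absurd hxI hx2⟩

lemma omega2_BmA (h : OmegaP I J) (h1 : (J \ I).ncard ≠ 1) :
    FmapB I J \ FmapA I J = minSet (J \ I) := by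
  rw [omega2_B h1, FmapA]
  ext x
  simp only [Set.mem_diff, Set.mem_union, Set.mem_inter_iff]
  constructor
  · rintro ⟨hx1 | hx1, hx2⟩
    · exact hx1
    · exact absurd hx1.2 hx2
  · intro hx
    exact ⟨Or.inl hx, omega2_min_notmax h h1 x hx⟩

lemma omega2_conn (h : OmegaP I J) : ConnIn ((maxSet J \ maxSet I) ∪ minSet (J \ I)) := by
  set S := J \ I with hS
  set Δ := (maxSet J \ maxSet I) ∪ minSet S with hΔ
  have hΔS : Δ ⊆ S := by
    rintro x (hx | hx)
    · exact maxJ_diff_sub h hx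
    · exact minSet_subset _ hx
  have babove : ∀ x ∈ S, ∃ b ∈ Δ, b ≤ x := by
    intro x hx
    obtain ⟨b, hb, hbx⟩ := exists_minSet_le hx
    exact ⟨b, Or.inr hb, hbx⟩
  have aabove : ∀ x ∈ S, ∃ a ∈ Δ, x ≤ a := by
    intro x hx
    obtain ⟨a, ha, haS, hxa⟩ := omega_exists_above h x hx
    exact ⟨a, Or.inl ⟨ha, not_maxI_of_S h haS⟩, hxa⟩
  have lift : ∀ x y : P, ReflTransGen (cR S) x y → x ∈ S →
      ∀ a ∈ Δ, x ≤ a → ∀ a' ∈ Δ, y ≤ a' → ReflTransGen (cR Δ) a a' := by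
    intro x y hpath
    induction hpath with
    | refl =>
      intro hxS a haΔ hxa a' ha'Δ hxa'
      obtain ⟨b, hbΔ, hbx⟩ := babove x hxS
      exact ReflTransGen.head ⟨haΔ, hbΔ, Or.inr (le_trans hbx hxa)⟩
        (ReflTransGen.single ⟨hbΔ, ha'Δ, Or.inl (le_trans hbx hxa')⟩)
    | tail hrest hstep ih =>
      rename_i b' c
      intro hxS a haΔ hxa a' ha'Δ hca'
      obtain ⟨hb'S, hcS, hcomp⟩ := hstep
      obtain ⟨ab, habΔ, hb'ab⟩ := aabove b' hb'S
      have hfirst : ReflTransGen (cR Δ) a ab := ih hxS a haΔ hxa ab habΔ hb'ab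
      rcases hcomp with hle | hle
      · obtain ⟨bb, hbbΔ, hbbb⟩ := babove b' hb'S
        exact hfirst.tail ⟨habΔ, hbbΔ, Or.inr (le_trans hbbb hb'ab)⟩ |>.tail
          ⟨hbbΔ, ha'Δ, Or.inl (le_trans hbbb (le_trans hle hca'))⟩
      · obtain ⟨bc, hbcΔ, hbcc⟩ := babove c hcS
        exact hfirst.tail ⟨habΔ, hbcΔ, Or.inr (le_trans hbcc (le_trans hle hb'ab))⟩ |>.tail
          ⟨hbcΔ, ha'Δ, Or.inl (le_trans hbcc hca')⟩
  intro u hu v hv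
  exact lift u v (h.2.2.2 u (hΔS hu) v (hΔS hv)) (hΔS hu) u hu (le_refl u) v hv (le_refl v)

lemma omega2_Bantichain (h : OmegaP I J) (h1 : (J \ I).ncard ≠ 1) :
    IsAntichain (· ≤ ·) (FmapB I J) := by
  rw [omega2_B h1]
  intro a ha b hb hne hab
  rcases ha with ha | ha <;> rcases hb with hb | hb
  · exact minSet_antichain _ ha hb hne hab
  · -- a ∈ minSet S, b ∈ maxSet I ∩ maxSet J
    exact (omega_S_up h b (hb.2.1) a ha.1 hab).2 hb.1.1
  · -- a ∈ maxSet I ∩ maxSet J, b ∈ minSet S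
    have : a = b := ha.2.2 b (minSet_subset _ hb).1 hab
    exact hne this
  · exact maxSet_antichain I (ha.1) (hb.1) hne hab

lemma omega_psi (h : OmegaP I J) : PsiP (FmapA I J) (FmapB I J) := by
  by_cases h1 : (J \ I).ncard = 1
  · obtain ⟨v, hv⟩ := Set.ncard_eq_one.1 h1
    obtain ⟨hvmax, hB⟩ := omega1 h hv
    obtain ⟨hd1, hd2⟩ := omega1_diff h hv
    refine ⟨maxSet_antichain J, ?_, ?_, ?_⟩
    · rw [hB]
      exact (maxSet_antichain J).subset Set.diff_subset
    · intro heq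
      have : v ∈ FmapA I J \ FmapB I J := by rw [hd1]; rfl
      rw [heq] at this
      exact this.2 this.1
    · rw [hd1, hd2, Set.union_empty]
      intro x hx y hy
      rw [mem_singleton_iff] at hx hy
      subst hx; subst hy
      exact ReflTransGen.refl
  · refine ⟨maxSet_antichain J, omega2_Bantichain h h1, ?_, ?_⟩
    · intro heq
      obtain ⟨a, ha⟩ := maxJ_diff_nonempty h
      have : a ∈ FmapA I J \ FmapB I J := by rw [omega2_AmB h h1]; exact ha
      rw [heq] at this
      exact this.2 this.1
    · rw [omega2_AmB h h1, omega2_BmA h h1]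
      exact omega2_conn h

end Regimes

section Orientation
variable {P : Type*} [Fintype P] [PartialOrder P] {A B : Set P}

lemma psi_delta_nonempty (hPsi : PsiP A B) : ((A \ B) ∪ (B \ A)).Nonempty := by
  rcases Set.eq_empty_or_nonempty ((A \ B) ∪ (B \ A)) with h | h
  · exfalso
    apply hPsi.2.2.1
    apply Set.Subset.antisymm
    · intro a ha
      by_contra hb
      have : a ∈ (A \ B) ∪ (B \ A) := Or.inl ⟨ha, hb⟩
      rw [h] at this; exact this
    · intro b hb
      by_contra ha
      have : b ∈ (A \ B) ∪ (B \ A) := Or.inr ⟨hb, ha⟩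
      rw [h] at this; exact this
  · exact h

lemma psi_two (hPsi : PsiP A B) (h2 : ((A \ B) ∪ (B \ A)).ncard ≠ 1) :
    ∀ v ∈ (A \ B) ∪ (B \ A), ∃ w ∈ (A \ B) ∪ (B \ A), w ≠ v := by
  intro v hv
  by_contra hc
  push_neg at hc
  apply h2
  have : (A \ B) ∪ (B \ A) = {v} := by
    ext x
    constructor
    · intro hx; exact hc x hx
    · intro hx; rw [mem_singleton_iff] at hx; subst hx; exact hv
  rw [this]
  exact Set.ncard_singleton v

lemma psi_neighbor (hPsi : PsiP A B) (h2 : ((A \ B) ∪ (B \ A)).ncard ≠ 1) :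
    ∀ v ∈ (A \ B) ∪ (B \ A), ∃ z ∈ (A \ B) ∪ (B \ A), (v ≤ z ∨ z ≤ v) ∧ v ≠ z := by
  intro v hv
  obtain ⟨w, hw, hwv⟩ := psi_two hPsi h2 v hv
  obtain ⟨z, hz, hvz⟩ := rtg_first_step (hPsi.2.2.2 v hv w hw) (Ne.symm hwv)
  exact ⟨z, hz.2.1, hz.2.2, hvz⟩

lemma psi_cross_neighbor (hPsi : PsiP A B) {v z : P}
    (hv : v ∈ A \ B) (hz : z ∈ (A \ B) ∪ (B \ A)) (hcomp : v ≤ z ∨ z ≤ v) (hne : v ≠ z) :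
    z ∈ B \ A := by
  rcases hz with hz | hz
  · exfalso
    rcases hcomp with h | h
    · exact hPsi.1 hv.1 hz.1 hne h
    · exact hPsi.1 hz.1 hv.1 (Ne.symm hne) h
  · exact hz

lemma psi_cross_neighbor' (hPsi : PsiP A B) {v z : P}
    (hv : v ∈ B \ A) (hz : z ∈ (A \ B) ∪ (B \ A)) (hcomp : v ≤ z ∨ z ≤ v) (hne : v ≠ z) :
    z ∈ A \ B := by
  rcases hz with hz | hz
  · exact hz
  · exfalso
    rcases hcomp with h | h
    · exact hPsi.2.1 hv.1 hz.1 hne h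
    · exact hPsi.2.1 hz.1 hv.1 (Ne.symm hne) h

lemma psi_sides_nonempty (hPsi : PsiP A B) (h2 : ((A \ B) ∪ (B \ A)).ncard ≠ 1) :
    (A \ B).Nonempty ∧ (B \ A).Nonempty := by
  obtain ⟨v, hv⟩ := psi_delta_nonempty hPsi
  obtain ⟨z, hz, hcomp, hne⟩ := psi_neighbor hPsi h2 v hv
  rcases hv with hv | hv
  · exact ⟨⟨v, hv⟩, ⟨z, psi_cross_neighbor hPsi hv hz hcomp hne⟩⟩
  · exact ⟨⟨z, psi_cross_neighbor' hPsi hv hz hcomp hne⟩, ⟨v, hv⟩⟩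

/-- Orientation: all comparable cross pairs go the same way. -/
lemma psi_orientation (hPsi : PsiP A B) (h2 : ((A \ B) ∪ (B \ A)).ncard ≠ 1) :
    (∀ a ∈ A \ B, ∀ b ∈ B \ A, ¬ a ≤ b) ∨ (∀ b ∈ B \ A, ∀ a ∈ A \ B, ¬ b ≤ a) := by
  by_contra hc
  push_neg at hc
  obtain ⟨⟨a₀, ha₀, b₀, hb₀, hab₀⟩, ⟨b₁, hb₁, a₁, ha₁, hba₁⟩⟩ := hc
  set Δ := (A \ B) ∪ (B \ A) with hΔ
  set Up : P → Prop := fun x =>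
    (x ∈ A \ B → ∀ z ∈ B \ A, (x ≤ z ∨ z ≤ x) → x < z) ∧
    (x ∈ B \ A → ∀ z ∈ A \ B, (x ≤ z ∨ z ≤ x) → z < x) with hUp
  have hne₀ : a₀ ≠ b₀ := fun h => hb₀.2 (h ▸ ha₀.1)
  have hUpa₀ : Up a₀ := by
    constructor
    · intro _ z hz hcomp
      rcases hcomp with h | h
      · exact lt_of_le_of_ne h (fun hh => hz.2 (hh ▸ ha₀.1))
      · exfalso
        have hzb : z = b₀ := by
          by_contra hne
          exact hPsi.2.1 hz.1 hb₀.1 hne (le_trans h hab₀)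
        subst hzb
        exact hne₀ (le_antisymm hab₀ h)
    · intro hmem
      exact absurd ha₀.1 hmem.2
  -- Up propagates along edges of Δ
  have hprop : ∀ u v : P, cR Δ u v → Up u → Up v := by
    intro u v hstep hu
    obtain ⟨huΔ, hvΔ, hcomp⟩ := hstep
    by_cases huv : u = v
    · rwa [← huv]
    rcases huΔ with huAB | huBA
    · have hvBA : v ∈ B \ A := psi_cross_neighbor hPsi huAB hvΔ hcomp huv
      have huv' : u < v := hu.1 huAB v hvBA hcomp
      constructor
      · intro hmem
        exact absurd hmem.1 hvBA.2
      · intro _ z hz hcompz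
        rcases hcompz with h | h
        · -- v ≤ z, z ∈ A \ B : u < v ≤ z with u,z ∈ A
          exfalso
          have huz : u = z := by
            by_contra hne
            exact hPsi.1 huAB.1 hz.1 hne (le_trans huv'.le h)
          subst huz
          exact absurd (lt_of_lt_of_le huv' h) (lt_irrefl u)
        · exact lt_of_le_of_ne h (fun hh => hz.2 (hh ▸ hvBA.1))
    · have hvAB : v ∈ A \ B := psi_cross_neighbor' hPsi huBA hvΔ hcomp huv
      have hvu : v < u := hu.2 huBA v hvAB hcomp
      constructor
      · intro _ z hz hcompz
        rcases hcompz with h | h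
        · exact lt_of_le_of_ne h (fun hh => hz.2 (hh ▸ hvAB.1))
        · exfalso
          have huz : z = u := by
            by_contra hne
            exact hPsi.2.1 hz.1 huBA.1 hne (le_trans h hvu.le)
          subst huz
          exact absurd (lt_of_le_of_lt h hvu) (lt_irrefl z)
      · intro hmem
        exact absurd hmem.1 hvAB.2
  have hUpAll : ∀ y, ReflTransGen (cR Δ) a₀ y → Up y := by
    intro y hpath
    induction hpath with
    | refl => exact hUpa₀
    | tail hrest hstep ih => exact hprop _ _ hstep ih
  have hUpa₁ : Up a₁ := hUpAll a₁ (hPsi.2.2.2 a₀ (Or.inl ha₀) a₁ (Or.inl ha₁))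
  have := hUpa₁.1 ha₁ b₁ hb₁ (Or.inr hba₁)
  have hne₁ : b₁ ≠ a₁ := fun h => ha₁.2 (h ▸ hb₁.1)
  exact absurd (lt_of_le_of_lt hba₁ this) (lt_irrefl b₁)

end Orientation

section Surj
variable {P : Type*} [Fintype P] [PartialOrder P] {A B : Set P}

lemma psi_surj_single (hPsi : PsiP A B) {v : P} (hAB : A \ B = {v}) (hBA : B \ A = ∅) :
    ∃ I J : Set P, OmegaP I J ∧ FmapA I J = A ∧ FmapB I J = B := by
  have hvA : v ∈ A \ B := by rw [hAB]; rfl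
  have hBsubA : B ⊆ A := by
    intro b hb
    by_contra ha
    have : b ∈ B \ A := ⟨hb, ha⟩
    rw [hBA] at this; exact this
  have hBeq : B = A \ {v} := by
    ext x
    constructor
    · intro hx
      refine ⟨hBsubA hx, fun hxv => ?_⟩
      rw [mem_singleton_iff] at hxv
      subst hxv
      exact hvA.2 hx
    · rintro ⟨hxA, hxv⟩
      by_contra hxB
      have : x ∈ A \ B := ⟨hxA, hxB⟩
      rw [hAB, mem_singleton_iff] at this
      exact hxv this
  set J : Set P := {x | ∃ a ∈ A, x ≤ a} with hJ
  set I : Set P := J \ {v} with hI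
  have hJlower : IsLowerSet J := lc_lower A
  have hmaxJ : maxSet J = A := maxSet_lc hPsi.1
  have hvJ : v ∈ J := ⟨v, hvA.1, le_refl v⟩
  have hvmaxJ : v ∈ maxSet J := by rw [hmaxJ]; exact hvA.1
  have hIlower : IsLowerSet I := by
    rintro a b hba ⟨haJ, hav⟩
    refine ⟨hJlower hba haJ, fun hbv => ?_⟩
    rw [mem_singleton_iff] at hbv
    subst hbv
    exact hav (mem_singleton_iff.2 (hvmaxJ.2 a haJ hba).symm)
  have hSS : J \ I = {v} := by
    ext x
    constructor
    · rintro ⟨hxJ, hxI⟩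
      by_contra hxv
      exact hxI ⟨hxJ, hxv⟩
    · intro hx
      rw [mem_singleton_iff] at hx
      subst hx
      exact ⟨hvJ, fun hh => hh.2 rfl⟩
  have hss : I ⊂ J := by
    constructor
    · exact Set.diff_subset
    · intro hsub
      have : v ∈ I := hsub hvJ
      exact this.2 rfl
  have homega : OmegaP I J := by
    refine ⟨hIlower, hJlower, hss, ?_⟩
    rw [hSS]
    intro x hx y hy
    rw [mem_singleton_iff] at hx hy
    subst hx; subst hy
    exact ReflTransGen.refl
  refine ⟨I, J, homega, by rw [FmapA, hmaxJ], ?_⟩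
  obtain ⟨_, hB⟩ := omega1 homega hSS
  rw [hB, hmaxJ, ← hBeq]

lemma psi_surj_main (hPsi : PsiP A B) (h2 : ((A \ B) ∪ (B \ A)).ncard ≠ 1)
    (hgood : ∀ a ∈ A \ B, ∀ b ∈ B \ A, ¬ a ≤ b) :
    ∃ I J : Set P, OmegaP I J ∧ FmapA I J = A ∧ FmapB I J = B := by
  set Δ := (A \ B) ∪ (B \ A) with hΔ
  obtain ⟨hABne, hBAne⟩ := psi_sides_nonempty hPsi h2
  -- every element of A \ B has a B \ A element strictly below, and vice versa
  have haB : ∀ a ∈ A \ B, ∃ b ∈ B \ A, b ≤ a ∧ b ≠ a := by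
    intro a ha
    obtain ⟨z, hz, hcomp, hne⟩ := psi_neighbor hPsi h2 a (Or.inl ha)
    have hzBA := psi_cross_neighbor hPsi ha hz hcomp hne
    rcases hcomp with h | h
    · exact absurd h (hgood a ha z hzBA)
    · exact ⟨z, hzBA, h, Ne.symm hne⟩
  have hbA : ∀ b ∈ B \ A, ∃ a ∈ A \ B, b ≤ a ∧ b ≠ a := by
    intro b hb
    obtain ⟨z, hz, hcomp, hne⟩ := psi_neighbor hPsi h2 b (Or.inr hb)
    have hzAB := psi_cross_neighbor' hPsi hb hz hcomp hne
    rcases hcomp with h | h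
    · exact ⟨z, hzAB, h, hne⟩
    · exact absurd h (hgood z hzAB b hb)
  set J : Set P := {x | ∃ a ∈ A, x ≤ a} with hJ
  set I : Set P := {x ∈ J | ¬ ∃ b ∈ B \ A, b ≤ x} with hI
  have hJlower : IsLowerSet J := lc_lower A
  have hmaxJ : maxSet J = A := maxSet_lc hPsi.1
  have hIlower : IsLowerSet I := by
    rintro a b hba ⟨haJ, hnb⟩
    refine ⟨hJlower hba haJ, fun ⟨c, hc, hcb⟩ => hnb ⟨c, hc, le_trans hcb hba⟩⟩
  have hSeq : J \ I = {x ∈ J | ∃ b ∈ B \ A, b ≤ x} := by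
    ext x
    constructor
    · rintro ⟨hxJ, hxI⟩
      refine ⟨hxJ, ?_⟩
      by_contra hc
      exact hxI ⟨hxJ, hc⟩
    · rintro ⟨hxJ, hb⟩
      exact ⟨hxJ, fun hh => hh.2 hb⟩
  have hBAS : B \ A ⊆ J \ I := by
    intro b hb
    obtain ⟨a, ha, hba, _⟩ := hbA b hb
    rw [hSeq]
    exact ⟨⟨a, ha.1, hba⟩, b, hb, le_refl b⟩
  have hABS : A \ B ⊆ J \ I := by
    intro a ha
    obtain ⟨b, hb, hba, _⟩ := haB a ha
    rw [hSeq]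
    exact ⟨⟨a, ha.1, le_refl a⟩, b, hb, hba⟩
  have hbelow : ∀ x ∈ J \ I, ∃ b ∈ B \ A, b ≤ x := by
    intro x hx
    rw [hSeq] at hx
    exact hx.2
  have habove : ∀ x ∈ J \ I, ∃ a ∈ A \ B, x ≤ a := by
    intro x hx
    rw [hSeq] at hx
    obtain ⟨⟨a, haA, hxa⟩, b, hbBA, hbx⟩ := hx
    refine ⟨a, ⟨haA, fun haB' => ?_⟩, hxa⟩
    have hba : b ≤ a := le_trans hbx hxa
    have : b = a := by
      by_contra hne
      exact hPsi.2.1 hbBA.1 haB' hne hba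
    subst this
    exact hbBA.2 haA
  have hss : I ⊂ J := by
    obtain ⟨b, hb⟩ := hBAne
    constructor
    · exact fun x hx => hx.1
    · intro hsub
      have hbS : b ∈ J \ I := hBAS hb
      exact hbS.2 (hsub hbS.1)
  have hconnS : ConnIn (J \ I) := by
    intro u hu v hv
    obtain ⟨bu, hbu, hbuu⟩ := hbelow u hu
    obtain ⟨bv, hbv, hbvv⟩ := hbelow v hv
    have hΔsub : Δ ⊆ J \ I := by
      rintro x (hx | hx)
      · exact hABS hx
      · exact hBAS hx
    have hmid : ReflTransGen (cR (J \ I)) bu bv :=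
      rtg_mono hΔsub (hPsi.2.2.2 bu (Or.inr hbu) bv (Or.inr hbv))
    exact ReflTransGen.head ⟨hu, hBAS hbu, Or.inr hbuu⟩
      (hmid.tail ⟨hBAS hbv, hv, Or.inl hbvv⟩)
  have homega : OmegaP I J := ⟨hIlower, hJlower, hss, hconnS⟩
  have hncard : (J \ I).ncard ≠ 1 := by
    intro hc
    obtain ⟨w, hw⟩ := Set.ncard_eq_one.1 hc
    obtain ⟨b, hb⟩ := hBAne
    obtain ⟨a, ha, hba, hne⟩ := hbA b hb
    have h1 : b ∈ J \ I := hBAS hb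
    have h2 : a ∈ J \ I := hABS ha
    rw [hw, mem_singleton_iff] at h1 h2
    exact hne (h1.trans h2.symm)
  have hminS : minSet (J \ I) = B \ A := by
    ext x
    constructor
    · intro hx
      obtain ⟨b, hb, hbx⟩ := hbelow x hx.1
      have : x = b := hx.2 b (hBAS hb) hbx
      rw [this]; exact hb
    · intro hx
      refine ⟨hBAS hx, fun y hy hyx => ?_⟩
      obtain ⟨b, hb, hby⟩ := hbelow y hy
      have hbx : b ≤ x := le_trans hby hyx
      have hbxeq : b = x := by
        by_contra hne
        exact hPsi.2.1 hb.1 hx.1 hne hbx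
      subst hbxeq
      exact le_antisymm hby hyx
  have hmaxImaxJ : maxSet I ∩ maxSet J = A ∩ B := by
    ext x
    constructor
    · rintro ⟨hxI, hxJ⟩
      have hxA : x ∈ A := by rw [← hmaxJ]; exact hxJ
      by_cases hxB : x ∈ B
      · exact ⟨hxA, hxB⟩
      · exfalso
        have : x ∈ J \ I := hABS ⟨hxA, hxB⟩
        exact this.2 hxI.1
    · rintro ⟨hxA, hxB⟩
      have hxJ : x ∈ J := ⟨x, hxA, le_refl x⟩
      have hxI : x ∈ I := by
        refine ⟨hxJ, ?_⟩
        rintro ⟨b, hb, hbx⟩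
        have : b = x := by
          by_contra hne
          exact hPsi.2.1 hb.1 hxB hne hbx
        subst this
        exact hb.2 hxA
      refine ⟨⟨hxI, fun y hy hxy => ?_⟩, by rw [hmaxJ]; exact hxA⟩
      have hymaxJ : x ∈ maxSet J := by rw [hmaxJ]; exact hxA
      exact hymaxJ.2 y hy.1 hxy
  refine ⟨I, J, homega, by rw [FmapA, hmaxJ], ?_⟩
  rw [omega2_B hncard, hminS, hmaxImaxJ]
  ext x
  constructor
  · rintro (hx | hx)
    · exact hx.1
    · exact hx.2
  · intro hx
    by_cases hxA : x ∈ A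
    · exact Or.inr ⟨hxA, hx⟩
    · exact Or.inl ⟨hx, hxA⟩

end Surj


section Inj
variable {P : Type*} [Fintype P] [PartialOrder P] {I J : Set P}

lemma diff_diff_eq_self {I J : Set P} (h : I ⊆ J) : J \ (J \ I) = I := by
  ext x
  constructor
  · rintro ⟨hxJ, hx⟩
    by_contra hxI
    exact hx ⟨hxJ, hxI⟩
  · intro hxI
    exact ⟨h hxI, fun hh => hh.2 hxI⟩

lemma omega_J_eq (h : OmegaP I J) : J = {x | ∃ a ∈ FmapA I J, x ≤ a} := lower_eq_lc h.2.1

lemma omega_S_recon2 (h : OmegaP I J) (h1 : (J \ I).ncard ≠ 1) :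
    J \ I = {x ∈ J | ∃ b ∈ FmapB I J \ FmapA I J, b ≤ x} := by
  rw [omega2_BmA h h1]
  ext x
  constructor
  · intro hx
    obtain ⟨m, hm, hmx⟩ := exists_minSet_le hx
    exact ⟨hx.1, m, hm, hmx⟩
  · rintro ⟨hxJ, b, hb, hbx⟩
    exact omega_S_up h x hxJ b (minSet_subset _ hb) hbx

lemma omega_regime1_delta (h : OmegaP I J) (h1 : (J \ I).ncard = 1) :
    ((FmapA I J \ FmapB I J) ∪ (FmapB I J \ FmapA I J)).ncard = 1 := by
  obtain ⟨v, hv⟩ := Set.ncard_eq_one.1 h1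
  obtain ⟨hd1, hd2⟩ := omega1_diff h hv
  rw [hd1, hd2, Set.union_empty]
  exact Set.ncard_singleton v

lemma omega_regime2_delta (h : OmegaP I J) (h1 : (J \ I).ncard ≠ 1) :
    ((FmapA I J \ FmapB I J) ∪ (FmapB I J \ FmapA I J)).ncard ≠ 1 := by
  intro hc
  obtain ⟨w, hw⟩ := Set.ncard_eq_one.1 hc
  obtain ⟨a, ha⟩ := maxJ_diff_nonempty h
  obtain ⟨x, hx⟩ := omega_S_nonempty h
  obtain ⟨b, hb, _⟩ := exists_minSet_le hx
  have haw : a ∈ ({w} : Set P) := by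
    rw [← hw]
    apply Set.mem_union_left
    rw [omega2_AmB h h1]
    exact ha
  have hbw : b ∈ ({w} : Set P) := by
    rw [← hw]
    apply Set.mem_union_right
    rw [omega2_BmA h h1]
    exact hb
  rw [mem_singleton_iff] at haw hbw
  have hab : a = b := haw.trans hbw.symm
  subst hab
  exact omega2_min_notmax h h1 a hb ha.1

lemma omega2_good (h : OmegaP I J) (h1 : (J \ I).ncard ≠ 1) :
    ∀ a ∈ FmapA I J \ FmapB I J, ∀ b ∈ FmapB I J \ FmapA I J, ¬ a ≤ b := by
  rw [omega2_AmB h h1, omega2_BmA h h1]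
  rintro a ⟨haJ, _⟩ b hb hab
  have : a = b := haJ.2 b (minSet_subset _ hb).1 hab
  subst this
  exact omega2_min_notmax h h1 a hb haJ

lemma omega_inj {I J I' J' : Set P} (h : OmegaP I J) (h' : OmegaP I' J')
    (heq : (FmapA I J = FmapA I' J' ∧ FmapB I J = FmapB I' J') ∨
           (FmapA I J = FmapB I' J' ∧ FmapB I J = FmapA I' J')) :
    I = I' ∧ J = J' := by
  have hΔeq : (FmapA I J \ FmapB I J) ∪ (FmapB I J \ FmapA I J)
      = (FmapA I' J' \ FmapB I' J') ∪ (FmapB I' J' \ FmapA I' J') := by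
    rcases heq with ⟨h1, h2⟩ | ⟨h1, h2⟩
    · rw [h1, h2]
    · rw [h1, h2]
      exact Set.union_comm _ _
  by_cases h1 : (J \ I).ncard = 1
  · have hd := omega_regime1_delta h h1
    have h1' : (J' \ I').ncard = 1 := by
      by_contra hc
      exact omega_regime2_delta h' hc (by rw [← hΔeq]; exact hd)
    obtain ⟨v, hv⟩ := Set.ncard_eq_one.1 h1
    obtain ⟨v', hv'⟩ := Set.ncard_eq_one.1 h1'
    obtain ⟨hd1, hd2⟩ := omega1_diff h hv
    obtain ⟨hd1', hd2'⟩ := omega1_diff h' hv'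
    rcases heq with ⟨hA, hB⟩ | ⟨hA, hB⟩
    · have hJJ : J = J' := by
        rw [omega_J_eq h, omega_J_eq h', hA]
      have hvv : v = v' := by
        have : ({v} : Set P) = {v'} := by
          rw [← hd1, ← hd1', hA, hB]
        exact Set.singleton_eq_singleton_iff.1 this
      have hII : I = I' := by
        have e1 : I = J \ {v} := by rw [← hv, diff_diff_eq_self h.2.2.1.subset]
        have e2 : I' = J' \ {v'} := by rw [← hv', diff_diff_eq_self h'.2.2.1.subset]
        rw [e1, e2, hJJ, hvv]
      exact ⟨hII, hJJ⟩
    · exfalso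
      -- crossed orientation in regime 1: B ⊂ A and A ⊂ B
      have hBsubA : FmapB I J ⊆ FmapA I J := by
        intro x hx
        by_contra hxA
        have : x ∈ FmapB I J \ FmapA I J := ⟨hx, hxA⟩
        rw [hd2] at this
        exact this
      have hAsubB : FmapA I J ⊆ FmapB I J := by
        intro x hx
        by_contra hxB
        have : x ∈ FmapB I' J' \ FmapA I' J' := ⟨hA ▸ hx, fun hh => hxB (hB ▸ hh)⟩
        rw [hd2'] at this
        exact this
      have : v ∈ FmapA I J \ FmapB I J := by rw [hd1]; rfl
      exact this.2 (hAsubB this.1)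
  · have h1' : (J' \ I').ncard ≠ 1 := by
      intro hc
      exact omega_regime2_delta h h1 (by rw [hΔeq]; exact omega_regime1_delta h' hc)
    rcases heq with ⟨hA, hB⟩ | ⟨hA, hB⟩
    · have hJJ : J = J' := by
        rw [omega_J_eq h, omega_J_eq h', hA]
      have hSS : J \ I = J' \ I' := by
        rw [omega_S_recon2 h h1, omega_S_recon2 h' h1', hA, hB, hJJ]
      have hII : I = I' := by
        have e1 : I = J \ (J \ I) := (diff_diff_eq_self h.2.2.1.subset).symm
        have e2 : I' = J' \ (J' \ I') := (diff_diff_eq_self h'.2.2.1.subset).symm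
        rw [e1, e2, hSS, hJJ]
      exact ⟨hII, hJJ⟩
    · exfalso
      have hPsi := omega_psi h
      have hΔn := omega_regime2_delta h h1
      obtain ⟨a, ha⟩ := maxJ_diff_nonempty h
      have haAB : a ∈ FmapA I J \ FmapB I J := by rw [omega2_AmB h h1]; exact ha
      obtain ⟨z, hz, hcomp, hne⟩ := psi_neighbor hPsi hΔn a (Or.inl haAB)
      have hzBA : z ∈ FmapB I J \ FmapA I J := psi_cross_neighbor hPsi haAB hz hcomp hne
      have hgood := omega2_good h h1
      have hgood' := omega2_good h' h1'
      rcases hcomp with hle | hle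
      · exact hgood a haAB z hzBA hle
      · refine hgood' z ?_ a ?_ hle
        · rw [← hB, ← hA]
          exact hzBA
        · rw [← hB, ← hA]
          exact haAB
  
end Inj

section SurjGlue
variable {P : Type*} [Fintype P] [PartialOrder P] {A B : Set P}

lemma psi_symm (h : PsiP A B) : PsiP B A := by
  obtain ⟨h1, h2, h3, h4⟩ := h
  refine ⟨h2, h1, Ne.symm h3, ?_⟩
  rwa [Set.union_comm]

lemma psi_surj (hPsi : PsiP A B) :
    ∃ I J : Set P, OmegaP I J ∧
      ((FmapA I J = A ∧ FmapB I J = B) ∨ (FmapA I J = B ∧ FmapB I J = A)) := by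
  by_cases h2 : ((A \ B) ∪ (B \ A)).ncard = 1
  · obtain ⟨v, hv⟩ := Set.ncard_eq_one.1 h2
    have hvmem : v ∈ (A \ B) ∪ (B \ A) := by rw [hv]; rfl
    rcases hvmem with hvAB | hvBA
    · have hAB : A \ B = {v} := by
        apply Set.Subset.antisymm
        · intro x hx
          rw [← hv]
          exact Or.inl hx
        · intro x hx
          rw [mem_singleton_iff] at hx
          subst hx
          exact hvAB
      have hBA : B \ A = ∅ := by
        ext x
        simp only [Set.mem_empty_iff_false, iff_false]
        intro hx
        have : x ∈ ({v} : Set P) := by rw [← hv]; exact Or.inr hx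
        rw [mem_singleton_iff] at this
        subst this
        exact hx.2 hvAB.1
      obtain ⟨I, J, hom, hA, hB⟩ := psi_surj_single hPsi hAB hBA
      exact ⟨I, J, hom, Or.inl ⟨hA, hB⟩⟩
    · have hPsi' := psi_symm hPsi
      have hAB : B \ A = {v} := by
        apply Set.Subset.antisymm
        · intro x hx
          rw [← hv]
          exact Or.inr hx
        · intro x hx
          rw [mem_singleton_iff] at hx
          subst hx
          exact hvBA
      have hBA : A \ B = ∅ := by
        ext x
        simp only [Set.mem_empty_iff_false, iff_false]
        intro hx
        have : x ∈ ({v} : Set P) := by rw [← hv]; exact Or.inl hx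
        rw [mem_singleton_iff] at this
        subst this
        exact hx.2 hvBA.1
      obtain ⟨I, J, hom, hA, hB⟩ := psi_surj_single hPsi' hAB hBA
      exact ⟨I, J, hom, Or.inr ⟨hA, hB⟩⟩
  · rcases psi_orientation hPsi h2 with hgood | hgood
    · obtain ⟨I, J, hom, hA, hB⟩ := psi_surj_main hPsi h2 hgood
      exact ⟨I, J, hom, Or.inl ⟨hA, hB⟩⟩
    · have h2' : ((B \ A) ∪ (A \ B)).ncard ≠ 1 := by
        rwa [Set.union_comm]
      obtain ⟨I, J, hom, hA, hB⟩ := psi_surj_main (psi_symm hPsi) h2' hgood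
      exact ⟨I, J, hom, Or.inr ⟨hA, hB⟩⟩

end SurjGlue

noncomputable instance {P : Type*} [Fintype P] [PartialOrder P] :
    Fintype {I : Set P // IsLowerSet I} := Fintype.ofFinite _

noncomputable instance {P : Type*} [Fintype P] [PartialOrder P] :
    Fintype {A : Set P // IsAntichain (· ≤ ·) A} := Fintype.ofFinite _

theorem stmt5 {P : Type*} [Fintype P] [PartialOrder P] :
    {e : Set (P → ℝ) | ∃ u v, IsEdgeOf (orderPolytope P) u v ∧ e = segment ℝ u v}.ncard =
    {e : Set (P → ℝ) | ∃ u v, IsEdgeOf (chainPolytope P) u v ∧ e = segment ℝ u v}.ncard := by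
  classical
  set Om : Set (Set P × Set P) := {p | OmegaP p.1 p.2} with hOm
  set fO : Set P × Set P → Set (P → ℝ) := fun p => segment ℝ (rho p.1) (rho p.2) with hfO
  set fC : Set P × Set P → Set (P → ℝ) :=
    fun p => segment ℝ (rho (FmapA p.1 p.2)) (rho (FmapB p.1 p.2)) with hfC
  have hEO : {e : Set (P → ℝ) | ∃ u v, IsEdgeOf (orderPolytope P) u v ∧ e = segment ℝ u v}
      = fO '' Om := by
    ext e
    constructor
    · rintro ⟨u, v, hedge, rfl⟩
      obtain ⟨I, J, hom, hseg⟩ := isEdge_omega ⟨hedge.1, hedge.2⟩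
      exact ⟨(I, J), hom, hseg.symm⟩
    · rintro ⟨⟨I, J⟩, hom, rfl⟩
      obtain ⟨hne, hext⟩ := omega_isEdge hom
      exact ⟨rho I, rho J, ⟨hne, hext⟩, rfl⟩
  have hEC : {e : Set (P → ℝ) | ∃ u v, IsEdgeOf (chainPolytope P) u v ∧ e = segment ℝ u v}
      = fC '' Om := by
    ext e
    constructor
    · rintro ⟨u, v, hedge, rfl⟩
      obtain ⟨X, Y, hPsi, rfl, rfl⟩ := isEdge_psi ⟨hedge.1, hedge.2⟩
      obtain ⟨I, J, hom, hor⟩ := psi_surj hPsi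
      refine ⟨(I, J), hom, ?_⟩
      rcases hor with ⟨hA, hB⟩ | ⟨hA, hB⟩
      · show segment ℝ (rho (FmapA I J)) (rho (FmapB I J)) = segment ℝ (rho X) (rho Y)
        rw [hA, hB]
      · show segment ℝ (rho (FmapA I J)) (rho (FmapB I J)) = segment ℝ (rho X) (rho Y)
        rw [hA, hB]
        exact segment_symm ℝ _ _
    · rintro ⟨⟨I, J⟩, hom, rfl⟩
      have hPsi := omega_psi hom
      obtain ⟨hne, hext⟩ := psi_isEdge hPsi
      exact ⟨_, _, ⟨hne, hext⟩, rfl⟩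
  have hInjO : Set.InjOn fO Om := by
    rintro ⟨I, J⟩ hIJ ⟨I', J'⟩ hIJ' heq
    have hom : OmegaP I J := hIJ
    have hom' : OmegaP I' J' := hIJ'
    have hne : rho I ≠ rho J := (omega_isEdge hom).1
    have heq' : segment ℝ (rho I) (rho J) = segment ℝ (rho I') (rho J') := heq
    rcases segment_endpoints hne heq' with ⟨e1, e2⟩ | ⟨e1, e2⟩
    · have h1 : I = I' := rho_inj e1.symm
      have h2 : J = J' := rho_inj e2.symm
      rw [Prod.mk.injEq]
      exact ⟨h1, h2⟩
    · exfalso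
      have h1 : I' = J := rho_inj e1
      have h2 : J' = I := rho_inj e2
      subst h1; subst h2
      exact absurd (hom.2.2.1.trans hom'.2.2.1) (lt_irrefl _)
  have hInjC : Set.InjOn fC Om := by
    rintro ⟨I, J⟩ hIJ ⟨I', J'⟩ hIJ' heq
    have hom : OmegaP I J := hIJ
    have hom' : OmegaP I' J' := hIJ'
    have hPsi := omega_psi hom
    have hne : rho (FmapA I J) ≠ rho (FmapB I J) := (psi_isEdge hPsi).1
    have heq' : segment ℝ (rho (FmapA I J)) (rho (FmapB I J))
        = segment ℝ (rho (FmapA I' J')) (rho (FmapB I' J')) := heq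
    rw [Prod.mk.injEq]
    rcases segment_endpoints hne heq' with ⟨e1, e2⟩ | ⟨e1, e2⟩
    · exact omega_inj hom hom' (Or.inl ⟨(rho_inj e1).symm, (rho_inj e2).symm⟩)
    · exact omega_inj hom hom' (Or.inr ⟨(rho_inj e2).symm, (rho_inj e1).symm⟩)
  rw [hEO, hEC, Set.ncard_image_of_injOn hInjO, Set.ncard_image_of_injOn hInjC]
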